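/- Let n and r be positive integers with n ≥ 2r − 2 and n ≥ 2, and let T_n be the depth-two claw with n leaves: the graph with vertex set {x_0} ∪ {x_1, ..., x_n} ∪ {y_1, ..., y_n} (2n+1 distinct vertices) and edge set {x_0 y_i : i ∈ [n]} ∪ {x_i y_i : i ∈ [n]}. Then every intersecting family of r-element independent sets of T_n has size at most the number of r-element independent sets of T_n that contain the vertex x_1. -/

import Mathlib

/-- The depth-two claw `Tₙ`: vertices are encoded as pairs of naturals, with
`x₀ = (0,0)`, `xᵢ = (i,1)` and `yᵢ = (i,2)` for `i ∈ [n]`; the edges are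
`x₀yᵢ` and `xᵢyᵢ` for `i ∈ [n]`. -/
def depthTwoClaw (n : ℕ) : SimpleGraph (ℕ × ℕ) :=
  SimpleGraph.fromEdgeSet
    {e | ∃ i ∈ Finset.Icc 1 n, e = s(((0 : ℕ), (0 : ℕ)), (i, 2)) ∨ e = s((i, 1), (i, 2))}

/-- The vertex set of the depth-two claw `Tₙ`. -/
def depthTwoClawVerts (n : ℕ) : Finset (ℕ × ℕ) :=
  insert ((0 : ℕ), (0 : ℕ)) ((Finset.Icc 1 n) ×ˢ ({1, 2} : Finset ℕ))

open Classical in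
/-- The family of `r`-element independent sets of the depth-two claw `Tₙ`. -/
noncomputable def depthTwoClawIndep (n r : ℕ) : Finset (Finset (ℕ × ℕ)) :=
  (depthTwoClawVerts n).powerset.filter
    (fun I => I.card = r ∧ ∀ u ∈ I, ∀ v ∈ I, ¬ (depthTwoClaw n).Adj u v)


open Finset

section Katona

variable {m L : ℕ}

/-- Katona's circle lemma: a family of pairwise-overlapping arcs of length `L`
on a cycle of length `m ≥ 2L` has at most `L` members. -/
lemma katona_circle (hL : 0 < L) (hLm : 2 * L ≤ m) [NeZero m] (T : Finset (ZMod m))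
    (h : ∀ p ∈ T, ∀ q ∈ T, ∃ j < L, ∃ j' < L, p + (j : ℕ) = q + (j' : ℕ)) :
    T.card ≤ L := by
  have hm : 0 < m := Nat.pos_of_ne_zero (NeZero.ne m)
  rcases T.eq_empty_or_nonempty with rfl | ⟨p₀, hp₀⟩
  · simpa using hL.le
  -- key fact about differences
  have key : ∀ p ∈ T, ∀ q ∈ T, (p - q).val < L ∨ m - L < (p - q).val := by
    intro p hp q hq
    obtain ⟨j, hj, j', hj', hpq⟩ := h q hq p hp
    -- q + j = p + j'
    have hd : p = q + ((p - q).val : ℕ) := by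
      rw [ZMod.natCast_val, ZMod.cast_id]; ring
    set d := (p - q).val with hdd
    have hdm : d < m := ZMod.val_lt _
    have : ((j : ZMod m)) = ((d + j' : ℕ) : ZMod m) := by
      push_cast
      have := hpq
      rw [hd] at this
      have h2 : (q : ZMod m) + (j:ℕ) = q + ((d:ℕ) + (j':ℕ)) := by
        rw [hpq, hd]; push_cast; ring
      have := add_left_cancel h2
      push_cast at this
      exact this
    rw [ZMod.natCast_eq_natCast_iff] at this
    have hmod : j % m = (d + j') % m := this
    have hjm : j < m := lt_of_lt_of_le hj (le_trans (Nat.le_mul_of_pos_left L (by norm_num)) hLm)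
    rw [Nat.mod_eq_of_lt hjm] at hmod
    rcases Nat.lt_or_ge (d + j') m with hcase | hcase
    · rw [Nat.mod_eq_of_lt hcase] at hmod
      left; omega
    · have h2m : d + j' < 2 * m := by omega
      have : (d + j') % m = d + j' - m := by
        have := Nat.mod_eq_sub_mod hcase
        rw [this, Nat.mod_eq_of_lt (by omega)]
      rw [this] at hmod
      right; omega
  -- the injection into range L
  have maps : ∀ p ∈ T, (if (p - p₀).val < L then (p - p₀).val else (p - p₀).val - (m - L)) ∈
      Finset.range L := by
    intro p hp
    have := key p hp p₀ hp₀
    have hdm : (p - p₀).val < m := ZMod.val_lt _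
    rcases this with h1 | h1
    · simp [h1]
    · rw [if_neg (by omega)]
      simp only [mem_range]
      omega
  have inj : Set.InjOn (fun p => if (p - p₀).val < L then (p - p₀).val
      else (p - p₀).val - (m - L)) T := by
    intro p hp q hq hpq
    simp only at hpq
    have hrec : ∀ x : ZMod m, x = p₀ + ((x - p₀).val : ℕ) := by
      intro x; rw [ZMod.natCast_val, ZMod.cast_id]; ring
    have hdp : (p - p₀).val < m := ZMod.val_lt _
    have hdq : (q - p₀).val < m := ZMod.val_lt _
    set a := (p - p₀).val
    set b := (q - p₀).val
    -- in each branch combination derive a = b or contradiction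
    by_cases h1 : a < L <;> by_cases h2 : b < L
    · -- both small
      rw [if_pos h1, if_pos h2] at hpq
      rw [hrec p, hrec q]
      exact congrArg (fun x : ℕ => p₀ + (x : ZMod m)) hpq
    · -- a < L, b large : q - p = b - a ≡ (m - L) + (stuff)… derive arcs disjoint contra
      exfalso
      rw [if_pos h1, if_neg h2] at hpq
      have hb : m - L < b := by rcases key q hq p₀ hp₀ with h | h; omega; omega
      -- b = a + (m - L)
      have hab : b = a + (m - L) := by omega
      -- overlap of arcs p q :
      obtain ⟨j, hj, j', hj', he⟩ := h p hp q hq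
      -- p + j = q + j' ; q = p₀ + b, p = p₀ + a
      have : ((a + j : ℕ) : ZMod m) = ((b + j' : ℕ) : ZMod m) := by
        have h3 : p₀ + ((a + j : ℕ) : ZMod m) = p₀ + ((b + j' : ℕ) : ZMod m) := by
          push_cast
          rw [← add_assoc, ← add_assoc, ← hrec p, ← hrec q]
          exact he
        exact add_left_cancel h3
      rw [ZMod.natCast_eq_natCast_iff] at this
      have hmm : (a + j) % m = (b + j') % m := this
      have hL2 : L ≤ m := by omega
      have haj : a + j < m := by omega
      rw [Nat.mod_eq_of_lt haj] at hmm
      rcases Nat.lt_or_ge (b + j') m with hc | hc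
      · rw [Nat.mod_eq_of_lt hc] at hmm; omega
      · have : (b + j') % m = b + j' - m := by
          rw [Nat.mod_eq_sub_mod hc, Nat.mod_eq_of_lt (by omega)]
        rw [this] at hmm; omega
    · -- symmetric
      exfalso
      rw [if_neg h1, if_pos h2] at hpq
      have ha : m - L < a := by rcases key p hp p₀ hp₀ with h | h; omega; omega
      have hab : a = b + (m - L) := by omega
      obtain ⟨j, hj, j', hj', he⟩ := h q hq p hp
      have : ((b + j : ℕ) : ZMod m) = ((a + j' : ℕ) : ZMod m) := by
        have h3 : p₀ + ((b + j : ℕ) : ZMod m) = p₀ + ((a + j' : ℕ) : ZMod m) := by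
          push_cast
          rw [← add_assoc, ← add_assoc, ← hrec q, ← hrec p]
          exact he
        exact add_left_cancel h3
      rw [ZMod.natCast_eq_natCast_iff] at this
      have hmm : (b + j) % m = (a + j') % m := this
      have hbj : b + j < m := by omega
      rw [Nat.mod_eq_of_lt hbj] at hmm
      rcases Nat.lt_or_ge (a + j') m with hc | hc
      · rw [Nat.mod_eq_of_lt hc] at hmm; omega
      · have : (a + j') % m = a + j' - m := by
          rw [Nat.mod_eq_sub_mod hc, Nat.mod_eq_of_lt (by omega)]
        rw [this] at hmm; omega
    · -- both large
      rw [if_neg h1, if_neg h2] at hpq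
      have ha : m - L < a := by rcases key p hp p₀ hp₀ with h | h; omega; omega
      have hb : m - L < b := by rcases key q hq p₀ hp₀ with h | h; omega; omega
      have hab : a = b := by omega
      rw [hrec p, hrec q]
      exact congrArg (fun x : ℕ => p₀ + (x : ZMod m)) hab
  calc T.card ≤ (Finset.range L).card := Finset.card_le_card_of_injOn _ maps inj
    _ = L := Finset.card_range L

end Katona

section Cycle

variable {γ : Type} [DecidableEq γ]

/-- the arc of length `L` starting at `p`, under labeling `β` -/
def cInterval {m : ℕ} (β : ZMod m → γ) (L : ℕ) (p : ZMod m) : Finset γ :=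
  (Finset.range L).image (fun j => β (p + (j : ℕ)))

lemma cInterval_image {m : ℕ} (β : ZMod m → γ) (L : ℕ) (p : ZMod m) (f : γ ≃ γ) :
    (cInterval β L p).image f = cInterval (⇑f ∘ β) L p := by
  unfold cInterval
  rw [Finset.image_image]
  rfl

/-- Generic Katona-cycle double-counting bound.  -/
theorem cycle_bound {m L : ℕ} (hm : 0 < m) (hL : 0 < L) (hLm : 2 * L ≤ m)
    (Arr : Finset (ZMod m → γ)) (hArrNe : Arr.Nonempty)
    (hinj : ∀ β ∈ Arr, Function.Injective β)
    (valid : Finset (Finset γ))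
    (hval : ∀ β ∈ Arr, ∀ p, cInterval β L p ∈ valid)
    (htrans : ∀ B ∈ valid, ∀ B' ∈ valid, ∃ f : γ ≃ γ,
      (∀ β ∈ Arr, (⇑f ∘ β) ∈ Arr) ∧ (∀ β ∈ Arr, (⇑f.symm ∘ β) ∈ Arr) ∧ B.image f = B')
    (ℬ : Finset (Finset γ)) (hBval : ℬ ⊆ valid)
    (hint : ∀ A ∈ ℬ, ∀ B ∈ ℬ, (A ∩ B).Nonempty) :
    ℬ.card * m ≤ L * valid.card := by
  haveI : NeZero m := ⟨hm.ne'⟩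
  classical
  set Inc : Finset ((ZMod m → γ) × ZMod m) := Arr ×ˢ (Finset.univ : Finset (ZMod m)) with hInc
  set N : Finset γ → ℕ :=
    fun B => (Inc.filter (fun x => cInterval x.1 L x.2 = B)).card with hN
  -- constancy of N on valid
  have Nconst : ∀ B ∈ valid, ∀ B' ∈ valid, N B = N B' := by
    intro B hB B' hB'
    obtain ⟨f, hf1, hf2, hfB⟩ := htrans B hB B' hB'
    rw [hN]
    refine Finset.card_bij' (fun x _ => ((⇑f ∘ x.1 : ZMod m → γ), x.2))
      (fun x _ => ((⇑f.symm ∘ x.1 : ZMod m → γ), x.2)) ?hi ?hj ?left ?right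
    case hi =>
      rintro ⟨β, p⟩ hx
      simp only [Finset.mem_filter, hInc, Finset.mem_product] at hx ⊢
      refine ⟨⟨hf1 β hx.1.1, Finset.mem_univ _⟩, ?_⟩
      rw [← cInterval_image, hx.2, hfB]
    case hj =>
      rintro ⟨β, p⟩ hx
      simp only [Finset.mem_filter, hInc, Finset.mem_product] at hx ⊢
      refine ⟨⟨hf2 β hx.1.1, Finset.mem_univ _⟩, ?_⟩
      rw [← cInterval_image, hx.2, ← hfB, Finset.image_image]
      simp
    case left =>
      rintro ⟨β, p⟩ hx
      have hz : (⇑f.symm ∘ (⇑f ∘ β)) = β := funext fun z => by simp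
      exact Prod.ext hz rfl
    case right =>
      rintro ⟨β, p⟩ hx
      have hz : (⇑f ∘ (⇑f.symm ∘ β)) = β := funext fun z => by simp
      exact Prod.ext hz rfl
  -- total incidence count
  have sumN : ∑ B ∈ valid, N B = Arr.card * m := by
    have h1 : Inc.card = ∑ B ∈ valid, N B := by
      rw [hN]
      exact Finset.card_eq_sum_card_fiberwise
        (fun x hx => by
          simp only [hInc, Finset.mem_coe, Finset.mem_product] at hx
          exact hval x.1 hx.1 x.2)
    have h2 : Inc.card = Arr.card * m := by
      rw [hInc, Finset.card_product, Finset.card_univ, ZMod.card]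
    omega
  -- per-arrangement bound via Katona
  have perArr : ∀ β ∈ Arr,
      ((Finset.univ : Finset (ZMod m)).filter (fun p => cInterval β L p ∈ ℬ)).card ≤ L := by
    intro β hβ
    apply katona_circle hL hLm
    intro p hp q hq
    simp only [Finset.mem_filter] at hp hq
    obtain ⟨v, hv⟩ := hint _ hp.2 _ hq.2
    rw [Finset.mem_inter] at hv
    obtain ⟨hv1, hv2⟩ := hv
    simp only [cInterval, Finset.mem_image, Finset.mem_range] at hv1 hv2
    obtain ⟨j, hj, hj2⟩ := hv1
    obtain ⟨j', hj', hj'2⟩ := hv2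
    exact ⟨j, hj, j', hj', hinj β hβ (hj2.trans hj'2.symm)⟩
  -- sum over ℬ of N
  have sumB : ∑ B ∈ ℬ, N B ≤ L * Arr.card := by
    set SB : Finset ((ZMod m → γ) × ZMod m) :=
      Inc.filter (fun x => cInterval x.1 L x.2 ∈ ℬ) with hSB
    have hA : SB.card = ∑ B ∈ ℬ, N B := by
      rw [Finset.card_eq_sum_card_fiberwise
        (s := SB) (f := fun x : (ZMod m → γ) × ZMod m => cInterval x.1 L x.2) (t := ℬ)
        (fun x hx => (Finset.mem_filter.1 hx).2)]
      apply Finset.sum_congr rfl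
      intro B hB
      rw [hN, Finset.filter_filter]
      congr 1
      apply Finset.filter_congr
      intro x _
      constructor
      · rintro ⟨_, h⟩; exact h
      · intro h
        refine ⟨?_, h⟩
        simpa [h] using hB
    have hB2 : SB.card = ∑ β ∈ Arr, (SB.filter (fun x => x.1 = β)).card := by
      exact Finset.card_eq_sum_card_fiberwise
        (f := Prod.fst) (t := Arr)
        (fun x hx => by
          have := (Finset.mem_filter.1 hx).1
          simp only [hInc, Finset.mem_product] at this
          exact this.1)
    have hper : ∀ β ∈ Arr, (SB.filter (fun x => x.1 = β)).card ≤ L := by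
      intro β hβ
      calc (SB.filter (fun x => x.1 = β)).card
          ≤ ((Finset.univ : Finset (ZMod m)).filter
              (fun p => cInterval β L p ∈ ℬ)).card := by
            apply Finset.card_le_card_of_injOn (fun x => x.2)
            · intro x hx
              simp only [Finset.mem_coe, Finset.mem_filter, hSB] at hx ⊢
              obtain ⟨⟨_, h2⟩, h3⟩ := hx
              refine ⟨Finset.mem_univ _, ?_⟩
              rw [← h3]; exact h2
            · intro x hx y hy hxy
              simp only [Finset.mem_coe, Finset.mem_filter] at hx hy
              exact Prod.ext (hx.2.trans hy.2.symm) hxy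
        _ ≤ L := perArr β hβ
    calc ∑ B ∈ ℬ, N B = SB.card := hA.symm
      _ = ∑ β ∈ Arr, (SB.filter (fun x => x.1 = β)).card := hB2
      _ ≤ ∑ β ∈ Arr, L := Finset.sum_le_sum hper
      _ = L * Arr.card := by rw [Finset.sum_const, smul_eq_mul, mul_comm]
  -- conclude
  rcases ℬ.eq_empty_or_nonempty with rfl | ⟨B₀, hB₀⟩
  · simp
  have hB₀v : B₀ ∈ valid := hBval hB₀
  have h1 : ℬ.card * N B₀ ≤ L * Arr.card := by
    have : ∑ B ∈ ℬ, N B = ℬ.card * N B₀ := by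
      rw [Finset.sum_congr rfl (fun B hB => Nconst B (hBval hB) B₀ hB₀v),
        Finset.sum_const, smul_eq_mul]
    omega
  have h2 : valid.card * N B₀ = Arr.card * m := by
    rw [← sumN]
    rw [Finset.sum_congr rfl (fun B hB => Nconst B hB B₀ hB₀v), Finset.sum_const, smul_eq_mul]
  have hArrpos : 0 < Arr.card := Finset.card_pos.2 hArrNe
  have key : (ℬ.card * m) * Arr.card ≤ (L * valid.card) * Arr.card := by
    calc (ℬ.card * m) * Arr.card = ℬ.card * (Arr.card * m) := by ring
      _ = ℬ.card * (valid.card * N B₀) := by rw [h2]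
      _ = valid.card * (ℬ.card * N B₀) := by ring
      _ ≤ valid.card * (L * Arr.card) := Nat.mul_le_mul_left _ h1
      _ = (L * valid.card) * Arr.card := by ring
  exact Nat.le_of_mul_le_mul_right key hArrpos

end Cycle
section PermHelper

variable {γ : Type} [DecidableEq γ]

/-- Given finsets `s t ⊆ u` with `|s| = |t|`, there is a permutation of `γ`
mapping `s` onto `t` and `u` onto `u`, identity outside `u`. -/
lemma permOfFinsets (s t u : Finset γ) (hs : s ⊆ u) (ht : t ⊆ u) (hc : s.card = t.card) :
    ∃ f : γ ≃ γ, s.image f = t ∧ (∀ x ∈ u, f x ∈ u) ∧ (∀ x ∈ u, f.symm x ∈ u) := by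
  classical
  have hc' : (u \ s).card = (u \ t).card := by
    rw [card_sdiff_of_subset hs, card_sdiff_of_subset ht, hc]
  let e1 : {x // x ∈ s} ≃ {x // x ∈ t} := Finset.equivOfCardEq hc
  let e2 : {x // x ∈ u \ s} ≃ {x // x ∈ u \ t} := Finset.equivOfCardEq hc'
  let F : γ → γ := fun x =>
    if hx : x ∈ s then (e1 ⟨x, hx⟩ : γ)
    else if hx2 : x ∈ u \ s then (e2 ⟨x, hx2⟩ : γ) else x
  let G : γ → γ := fun x =>
    if hx : x ∈ t then (e1.symm ⟨x, hx⟩ : γ)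
    else if hx2 : x ∈ u \ t then (e2.symm ⟨x, hx2⟩ : γ) else x
  have hFs : ∀ x (hx : x ∈ s), F x = (e1 ⟨x, hx⟩ : γ) := by
    intro x hx; simp only [F, dif_pos hx]
  have hFus : ∀ x (hx : x ∈ u \ s), F x = (e2 ⟨x, hx⟩ : γ) := by
    intro x hx
    have : x ∉ s := (mem_sdiff.1 hx).2
    simp only [F, dif_neg this, dif_pos hx]
  have hFo : ∀ x, x ∉ u → F x = x := by
    intro x hx
    have h1 : x ∉ s := fun h => hx (hs h)
    have h2 : x ∉ u \ s := fun h => hx (mem_sdiff.1 h).1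
    simp only [F, dif_neg h1, dif_neg h2]
  have hGt : ∀ x (hx : x ∈ t), G x = (e1.symm ⟨x, hx⟩ : γ) := by
    intro x hx; simp only [G, dif_pos hx]
  have hGut : ∀ x (hx : x ∈ u \ t), G x = (e2.symm ⟨x, hx⟩ : γ) := by
    intro x hx
    have : x ∉ t := (mem_sdiff.1 hx).2
    simp only [G, dif_neg this, dif_pos hx]
  have hGo : ∀ x, x ∉ u → G x = x := by
    intro x hx
    have h1 : x ∉ t := fun h => hx (ht h)
    have h2 : x ∉ u \ t := fun h => hx (mem_sdiff.1 h).1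
    simp only [G, dif_neg h1, dif_neg h2]
  have hGF : ∀ x, G (F x) = x := by
    intro x
    by_cases hx : x ∈ s
    · rw [hFs x hx]
      have hmem : ((e1 ⟨x, hx⟩ : {x // x ∈ t}) : γ) ∈ t := (e1 ⟨x, hx⟩).2
      rw [hGt _ hmem]
      simp [e1]
    · by_cases hx2 : x ∈ u \ s
      · rw [hFus x hx2]
        have hmem : ((e2 ⟨x, hx2⟩ : {x // x ∈ u \ t}) : γ) ∈ u \ t := (e2 ⟨x, hx2⟩).2
        rw [hGut _ hmem]
        simp [e2]
      · have hxu : x ∉ u := by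
          intro h; exact hx2 (mem_sdiff.2 ⟨h, hx⟩)
        rw [hFo x hxu, hGo x hxu]
  have hFG : ∀ x, F (G x) = x := by
    intro x
    by_cases hx : x ∈ t
    · rw [hGt x hx]
      have hmem : ((e1.symm ⟨x, hx⟩ : {x // x ∈ s}) : γ) ∈ s := (e1.symm ⟨x, hx⟩).2
      rw [hFs _ hmem]
      simp [e1]
    · by_cases hx2 : x ∈ u \ t
      · rw [hGut x hx2]
        have hmem : ((e2.symm ⟨x, hx2⟩ : {x // x ∈ u \ s}) : γ) ∈ u \ s := (e2.symm ⟨x, hx2⟩).2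
        rw [hFus _ hmem]
        simp [e2]
      · have hxu : x ∉ u := by
          intro h; exact hx2 (mem_sdiff.2 ⟨h, hx⟩)
        rw [hGo x hxu, hFo x hxu]
  refine ⟨⟨F, G, hGF, hFG⟩, ?_, ?_, ?_⟩
  · -- image
    apply Finset.eq_of_subset_of_card_le
    · intro y hy
      rw [Finset.mem_image] at hy
      obtain ⟨x, hx, rfl⟩ := hy
      show F x ∈ t
      rw [hFs x hx]
      exact (e1 ⟨x, hx⟩).2
    · simp only [Equiv.coe_fn_mk]
      rw [Finset.card_image_of_injective _ (Function.LeftInverse.injective hGF), hc]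
  · intro x hx
    show F x ∈ u
    by_cases h1 : x ∈ s
    · rw [hFs x h1]; exact ht (e1 ⟨x, h1⟩).2
    · rw [hFus x (mem_sdiff.2 ⟨hx, h1⟩)]
      exact (mem_sdiff.1 (e2 ⟨x, mem_sdiff.2 ⟨hx, h1⟩⟩).2).1
  · intro x hx
    show G x ∈ u
    by_cases h1 : x ∈ t
    · rw [hGt x h1]; exact hs (e1.symm ⟨x, h1⟩).2
    · rw [hGut x (mem_sdiff.2 ⟨hx, h1⟩)]
      exact (mem_sdiff.1 (e2.symm ⟨x, mem_sdiff.2 ⟨hx, h1⟩⟩).2).1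

end PermHelper

section SigDefs

/-- the grid of signed vertices -/
def sGrid (n : ℕ) : Finset (ℕ × ℕ) := (Finset.Icc 1 n) ×ˢ ({1, 2} : Finset ℕ)

def flipv : ℕ × ℕ → ℕ × ℕ := fun v => (v.1, 3 - v.2)

/-- valid signed `r`-sets -/
def sValid (n r : ℕ) : Finset (Finset (ℕ × ℕ)) :=
  ((sGrid n).powersetCard r).filter (fun I => ∀ v ∈ I, ∀ w ∈ I, v.1 = w.1 → v = w)

lemma mem_sGrid {n : ℕ} {v : ℕ × ℕ} :
    v ∈ sGrid n ↔ (1 ≤ v.1 ∧ v.1 ≤ n) ∧ (v.2 = 1 ∨ v.2 = 2) := by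
  unfold sGrid
  rw [Finset.mem_product, Finset.mem_Icc]
  simp

lemma mem_sValid {n r : ℕ} {I : Finset (ℕ × ℕ)} :
    I ∈ sValid n r ↔ (I ⊆ sGrid n ∧ I.card = r) ∧
      ∀ v ∈ I, ∀ w ∈ I, v.1 = w.1 → v = w := by
  unfold sValid
  rw [Finset.mem_filter, Finset.mem_powersetCard]

lemma sGrid_fst {n : ℕ} {v w : ℕ × ℕ} (hv : v ∈ sGrid n) (hw : w ∈ sGrid n)
    (h : v.1 = w.1) : v = w ∨ v = flipv w := by
  rw [mem_sGrid] at hv hw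
  rcases hv.2 with h1 | h1 <;> rcases hw.2 with h2 | h2
  · left; exact Prod.ext h (h1.trans h2.symm)
  · right; unfold flipv; rw [h2]; exact Prod.ext h (by omega)
  · right; unfold flipv; rw [h2]; exact Prod.ext h (by omega)
  · left; exact Prod.ext h (h1.trans h2.symm)

lemma flipv_mem {n : ℕ} {v : ℕ × ℕ} (hv : v ∈ sGrid n) : flipv v ∈ sGrid n := by
  rw [mem_sGrid] at hv ⊢
  unfold flipv
  rcases hv.2 with h | h <;> simp [h, hv.1]

/-- arrangements -/
def sArr (n : ℕ) [NeZero (2 * n)] : Finset (ZMod (2 * n) → ℕ × ℕ) :=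
  (Fintype.piFinset fun _ => sGrid n).filter
    (fun β => Function.Injective β ∧ ∀ p, β (p + (n : ℕ)) = flipv (β p))

lemma mem_sArr {n : ℕ} [NeZero (2 * n)] {β : ZMod (2 * n) → ℕ × ℕ} :
    β ∈ sArr n ↔ (∀ p, β p ∈ sGrid n) ∧ Function.Injective β ∧
      ∀ p, β (p + (n : ℕ)) = flipv (β p) := by
  unfold sArr
  rw [Finset.mem_filter, Fintype.mem_piFinset]

/-- the canonical arrangement -/
def sbase (n : ℕ) [NeZero (2 * n)] : ZMod (2 * n) → ℕ × ℕ :=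
  fun p => if p.val < n then (p.val + 1, 1) else (p.val - n + 1, 2)

end SigDefs

section SigArr

variable {n r : ℕ}

lemma sArr_nonempty (hn : 0 < n) [NeZero (2 * n)] : (sArr n).Nonempty := by
  refine ⟨sbase n, ?_⟩
  have hval2n : ∀ p : ZMod (2 * n), p.val < 2 * n := fun p => ZMod.val_lt p
  have hnval : ((n : ℕ) : ZMod (2 * n)).val = n := by
    rw [ZMod.val_natCast, Nat.mod_eq_of_lt (by omega)]
  have haddval : ∀ p : ZMod (2 * n), (p + (n : ℕ)).val = (p.val + n) % (2 * n) := by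
    intro p
    rw [ZMod.val_add, hnval]
  rw [mem_sArr]
  refine ⟨?_, ?_, ?_⟩
  · intro p
    unfold sbase
    by_cases h : p.val < n
    · rw [if_pos h, mem_sGrid]
      refine ⟨⟨?_, ?_⟩, ?_⟩ <;> simp <;> omega
    · rw [if_neg h, mem_sGrid]
      have := hval2n p
      refine ⟨⟨?_, ?_⟩, ?_⟩ <;> simp <;> omega
  · intro p q hpq
    unfold sbase at hpq
    by_cases h1 : p.val < n <;> by_cases h2 : q.val < n <;>
      simp only [if_pos, if_neg, h1, h2, ite_true, ite_false, Prod.mk.injEq] at hpq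
    · exact ZMod.val_injective _ (by omega)
    · exact absurd hpq.2 (by norm_num)
    · exact absurd hpq.2 (by norm_num)
    · have := hval2n p; have := hval2n q
      exact ZMod.val_injective _ (by omega)
  · intro p
    have hv := hval2n p
    unfold sbase flipv
    by_cases h : p.val < n
    · have hadd : (p + (n : ℕ)).val = p.val + n := by
        rw [haddval, Nat.mod_eq_of_lt (by omega)]
      rw [hadd, if_neg (by omega : ¬ p.val + n < n), if_pos h]
      refine Prod.ext ?_ ?_ <;> simp <;> omega
    · have hadd : (p + (n : ℕ)).val = p.val - n := by
        rw [haddval, Nat.mod_eq_sub_mod (by omega), Nat.mod_eq_of_lt (by omega)]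
        omega
      rw [hadd, if_pos (by omega : p.val - n < n), if_neg h]
      refine Prod.ext ?_ ?_ <;> simp <;> omega

lemma sArr_interval_valid (hn : 0 < n) (hrn : r ≤ n) [NeZero (2 * n)]
    {β : ZMod (2 * n) → ℕ × ℕ}
    (hβ : β ∈ sArr n) (p : ZMod (2 * n)) : cInterval β r p ∈ sValid n r := by
  rw [mem_sArr] at hβ
  obtain ⟨hgrid, hinj, hflip⟩ := hβ
  have castinj : ∀ j j' : ℕ, j < 2 * n → j' < 2 * n →
      ((j : ℕ) : ZMod (2 * n)) = ((j' : ℕ) : ZMod (2 * n)) → j = j' := by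
    intro j j' hj hj' h
    rw [ZMod.natCast_eq_natCast_iff] at h
    rwa [Nat.ModEq, Nat.mod_eq_of_lt hj, Nat.mod_eq_of_lt hj'] at h
  rw [mem_sValid]
  have hinj2 : Set.InjOn (fun j : ℕ => β (p + (j : ℕ))) (Finset.range r) := by
    intro j hj j' hj' h
    simp only [Finset.coe_range, Set.mem_Iio] at hj hj'
    have h2 := add_left_cancel (hinj h)
    exact castinj j j' (by omega) (by omega) h2
  refine ⟨⟨?_, ?_⟩, ?_⟩
  · intro v hv
    simp only [cInterval, Finset.mem_image] at hv
    obtain ⟨j, _, rfl⟩ := hv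
    exact hgrid _
  · rw [cInterval, Finset.card_image_of_injOn hinj2, Finset.card_range]
  · intro v hv w hw hfst
    simp only [cInterval, Finset.mem_image, Finset.mem_range] at hv hw
    obtain ⟨j, hj, rfl⟩ := hv
    obtain ⟨j', hj', rfl⟩ := hw
    rcases sGrid_fst (hgrid _) (hgrid _) hfst with h | h
    · exact h
    · exfalso
      have h2 : β (p + (j : ℕ)) = β ((p + (j' : ℕ)) + (n : ℕ)) := by
        rw [hflip]; exact h
      have h3 := hinj h2
      have h4 : p + ((j : ℕ) : ZMod (2 * n)) = p + ((j' + n : ℕ) : ZMod (2 * n)) := by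
        rw [h3]; push_cast; ring
      have := castinj j (j' + n) (by omega) (by omega) (add_left_cancel h4)
      omega

end SigArr

section SigTrans

variable {n r : ℕ}

def swap12 : ℕ → ℕ := fun s => if s = 1 then 2 else if s = 2 then 1 else s

lemma swap12_invol : ∀ s, swap12 (swap12 s) = s := by
  intro s; unfold swap12
  by_cases h1 : s = 1 <;> by_cases h2 : s = 2 <;> simp [h1, h2]

lemma swap12_mem {s : ℕ} (h : s = 1 ∨ s = 2) : swap12 s = 1 ∨ swap12 s = 2 := by
  rcases h with h | h <;> simp [swap12, h]

lemma swap12_flip {s : ℕ} (h : s = 1 ∨ s = 2) : swap12 (3 - s) = 3 - swap12 s := by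
  rcases h with h | h <;> simp [swap12, h]

def sgn (B : Finset (ℕ × ℕ)) (i : ℕ) : ℕ := if (i, 1) ∈ B then 1 else 2

lemma sgn_mem12 (B : Finset (ℕ × ℕ)) (i : ℕ) : sgn B i = 1 ∨ sgn B i = 2 := by
  unfold sgn; split <;> simp

lemma sValid_sgn_eq {B : Finset (ℕ × ℕ)} (hB : B ∈ sValid n r) {i s : ℕ}
    (h : (i, s) ∈ B) : s = sgn B i := by
  rw [mem_sValid] at hB
  have hgrid := hB.1.1 h
  rw [mem_sGrid] at hgrid
  rcases hgrid.2 with h1 | h1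
  · simp only at h1; subst h1; unfold sgn; rw [if_pos h]
  · simp only at h1; subst h1
    unfold sgn
    split
    · next h2 =>
      have := hB.2 _ h _ h2 rfl
      simp at this
    · rfl

lemma sValid_mem_sgn {B : Finset (ℕ × ℕ)} (hB : B ∈ sValid n r) {i : ℕ}
    (h : i ∈ B.image Prod.fst) : (i, sgn B i) ∈ B := by
  rw [Finset.mem_image] at h
  obtain ⟨v, hv, rfl⟩ := h
  have h2 : v.2 = sgn B v.1 := sValid_sgn_eq hB (by simpa using hv)
  rw [← h2]
  simpa using hv

def twistMap (π : ℕ ≃ ℕ) (c : ℕ → Bool) : ℕ × ℕ → ℕ × ℕ :=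
  fun v => (π v.1, if c v.1 then swap12 v.2 else v.2)

lemma twist_inverse (π : ℕ ≃ ℕ) (c : ℕ → Bool) :
    ∀ v, twistMap π.symm (fun i => c (π.symm i)) (twistMap π c v) = v ∧
      twistMap π c (twistMap π.symm (fun i => c (π.symm i)) v) = v := by
  intro v
  unfold twistMap
  constructor
  · simp only [Equiv.symm_apply_apply]
    by_cases h : c v.1
    · simp [h, swap12_invol]
    · simp [h]
  · simp only [Equiv.apply_symm_apply]
    by_cases h : c (π.symm v.1)
    · simp [h, swap12_invol]
    · simp [h]

lemma twist_grid {n : ℕ} (π : ℕ ≃ ℕ) (c : ℕ → Bool)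
    (hπ : ∀ x ∈ Finset.Icc 1 n, π x ∈ Finset.Icc 1 n) {v : ℕ × ℕ}
    (hv : v ∈ sGrid n) : twistMap π c v ∈ sGrid n := by
  rw [mem_sGrid] at hv ⊢
  unfold twistMap
  constructor
  · have := hπ v.1 (Finset.mem_Icc.2 hv.1)
    rw [Finset.mem_Icc] at this
    exact this
  · by_cases h : c v.1
    · simp only [if_pos h]
      exact swap12_mem hv.2
    · simp only [if_neg h]
      exact hv.2

lemma twist_flip {n : ℕ} (π : ℕ ≃ ℕ) (c : ℕ → Bool) {v : ℕ × ℕ}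
    (hv : v ∈ sGrid n) : twistMap π c (flipv v) = flipv (twistMap π c v) := by
  rw [mem_sGrid] at hv
  unfold twistMap flipv
  simp only
  by_cases h : c v.1
  · refine Prod.ext rfl ?_
    show (if c (flipv v).1 then swap12 (flipv v).2 else (flipv v).2)
        = 3 - (if c v.1 then swap12 v.2 else v.2)
    rw [show (flipv v).1 = v.1 from rfl, show (flipv v).2 = 3 - v.2 from rfl,
      if_pos h, if_pos h]
    exact swap12_flip hv.2
  · refine Prod.ext rfl ?_
    show (if c (flipv v).1 then swap12 (flipv v).2 else (flipv v).2)
        = 3 - (if c v.1 then swap12 v.2 else v.2)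
    rw [show (flipv v).1 = v.1 from rfl, show (flipv v).2 = 3 - v.2 from rfl,
      if_neg h, if_neg h]

lemma twist_inj (π : ℕ ≃ ℕ) (c : ℕ → Bool) : Function.Injective (twistMap π c) := by
  intro v w h
  unfold twistMap at h
  rw [Prod.mk.injEq] at h
  have h1 : v.1 = w.1 := π.injective h.1
  refine Prod.ext h1 ?_
  have := h.2
  rw [h1] at this
  by_cases hc : c w.1
  · rw [if_pos hc, if_pos hc] at this
    have := congrArg swap12 this
    rwa [swap12_invol, swap12_invol] at this
  · rwa [if_neg hc, if_neg hc] at this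

lemma twist_arr {n : ℕ} [NeZero (2 * n)] (π : ℕ ≃ ℕ) (c : ℕ → Bool)
    (hπ : ∀ x ∈ Finset.Icc 1 n, π x ∈ Finset.Icc 1 n) :
    ∀ β ∈ sArr n, (twistMap π c ∘ β) ∈ sArr n := by
  intro β hβ
  rw [mem_sArr] at hβ ⊢
  obtain ⟨hg, hi, hf⟩ := hβ
  refine ⟨fun p => twist_grid π c hπ (hg p), (twist_inj π c).comp hi, fun p => ?_⟩
  simp only [Function.comp_apply, hf p]
  exact twist_flip π c (hg p)

/-- transitivity hypothesis for the signed cycle bound -/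
lemma sValid_trans (hn : 0 < n) [NeZero (2 * n)] :
    ∀ B ∈ sValid n r, ∀ B' ∈ sValid n r, ∃ f : (ℕ × ℕ) ≃ (ℕ × ℕ),
      (∀ β ∈ sArr n, (⇑f ∘ β) ∈ sArr n) ∧ (∀ β ∈ sArr n, (⇑f.symm ∘ β) ∈ sArr n) ∧
        B.image f = B' := by
  intro B hB B' hB'
  classical
  have hBv := mem_sValid.1 hB
  have hB'v := mem_sValid.1 hB'
  -- supports
  set S : Finset ℕ := B.image Prod.fst with hS
  set S' : Finset ℕ := B'.image Prod.fst with hS'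
  have hScard : S.card = r := by
    rw [hS, Finset.card_image_of_injOn, hBv.1.2]
    intro v hv w hw h
    exact hBv.2 v hv w hw h
  have hS'card : S'.card = r := by
    rw [hS', Finset.card_image_of_injOn, hB'v.1.2]
    intro v hv w hw h
    exact hB'v.2 v hv w hw h
  have hSsub : S ⊆ Finset.Icc 1 n := by
    intro i hi
    rw [hS, Finset.mem_image] at hi
    obtain ⟨v, hv, rfl⟩ := hi
    have := mem_sGrid.1 (hBv.1.1 hv)
    exact Finset.mem_Icc.2 this.1
  have hS'sub : S' ⊆ Finset.Icc 1 n := by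
    intro i hi
    rw [hS', Finset.mem_image] at hi
    obtain ⟨v, hv, rfl⟩ := hi
    have := mem_sGrid.1 (hB'v.1.1 hv)
    exact Finset.mem_Icc.2 this.1
  obtain ⟨π, hπ1, hπ2, hπ3⟩ :=
    permOfFinsets S S' (Finset.Icc 1 n) hSsub hS'sub (hScard.trans hS'card.symm)
  set c : ℕ → Bool := fun i => decide (i ∈ S ∧ sgn B i ≠ sgn B' (π i)) with hc
  set F := twistMap π c with hF
  set G := twistMap π.symm (fun i => c (π.symm i)) with hG
  have hFG := twist_inverse π c
  let f : (ℕ × ℕ) ≃ (ℕ × ℕ) := ⟨F, G, fun v => (hFG v).1, fun v => (hFG v).2⟩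
  have hfeq : ⇑f = F := rfl
  have hfsymm : ⇑f.symm = G := rfl
  refine ⟨f, ?_, ?_, ?_⟩
  · rw [hfeq, hF]
    exact fun β hβ => twist_arr π c hπ2 β hβ
  · rw [hfsymm, hG]
    refine fun β hβ => twist_arr π.symm _ ?_ β hβ
    exact hπ3
  · -- image f B = B'
    rw [hfeq]
    have hsub : B.image F ⊆ B' := by
      intro w hw
      rw [Finset.mem_image] at hw
      obtain ⟨v, hv, rfl⟩ := hw
      have hs2 : v.2 = sgn B v.1 := sValid_sgn_eq hB (by simpa using hv)
      have hvS : v.1 ∈ S := by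
        rw [hS, Finset.mem_image]; exact ⟨v, hv, rfl⟩
      have hπS' : π v.1 ∈ S' := by
        rw [← hπ1, Finset.mem_image]; exact ⟨v.1, hvS, rfl⟩
      have htarget : (π v.1, sgn B' (π v.1)) ∈ B' := by
        apply sValid_mem_sgn hB'
        rw [hS'] at hπS'
        exact hπS' 
      have : F v = (π v.1, sgn B' (π v.1)) := by
        rw [hF]
        unfold twistMap
        refine Prod.ext rfl ?_
        simp only
        by_cases hcv : v.1 ∈ S ∧ sgn B v.1 ≠ sgn B' (π v.1)
        · rw [if_pos (by rw [hc]; exact decide_eq_true hcv)]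
          rw [hs2]
          rcases sgn_mem12 B v.1 with h1 | h1 <;> rcases sgn_mem12 B' (π v.1) with h2 | h2 <;>
            simp [swap12, h1, h2] at hcv ⊢ <;> omega
        · rw [if_neg (by rw [hc]; simp only [decide_eq_true_eq]; exact hcv)]
          have heq : sgn B v.1 = sgn B' (π v.1) := by
            by_contra hne
            exact hcv ⟨hvS, hne⟩
          rw [hs2]
          exact heq
      rw [this]
      exact htarget
    apply Finset.eq_of_subset_of_card_le hsub
    rw [Finset.card_image_of_injective _ (twist_inj π c), hBv.1.2, hB'v.1.2]

end SigTrans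

section Counting

/-- encoding of a signed set from support and `x`-part -/
def enc (S F : Finset ℕ) : Finset (ℕ × ℕ) :=
  F.image (fun i => (i, 1)) ∪ (S \ F).image (fun i => (i, 2))

lemma mem_enc {S F : Finset ℕ} {v : ℕ × ℕ} :
    v ∈ enc S F ↔ (v.1 ∈ F ∧ v.2 = 1) ∨ (v.1 ∈ S \ F ∧ v.2 = 2) := by
  unfold enc
  rw [Finset.mem_union, Finset.mem_image, Finset.mem_image]
  constructor
  · rintro (⟨i, hi, rfl⟩ | ⟨i, hi, rfl⟩)
    · exact Or.inl ⟨hi, rfl⟩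
    · exact Or.inr ⟨hi, rfl⟩
  · rintro (⟨h1, h2⟩ | ⟨h1, h2⟩)
    · exact Or.inl ⟨v.1, h1, by rw [← h2]⟩
    · exact Or.inr ⟨v.1, h1, by rw [← h2]⟩

lemma enc_supp {S F : Finset ℕ} (h : F ⊆ S) : (enc S F).image Prod.fst = S := by
  ext i
  rw [Finset.mem_image]
  constructor
  · rintro ⟨v, hv, rfl⟩
    rcases mem_enc.1 hv with ⟨h1, _⟩ | ⟨h1, _⟩
    · exact h h1
    · exact (Finset.mem_sdiff.1 h1).1
  · intro hi
    by_cases hF : i ∈ F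
    · exact ⟨(i, 1), mem_enc.2 (Or.inl ⟨hF, rfl⟩), rfl⟩
    · exact ⟨(i, 2), mem_enc.2 (Or.inr ⟨Finset.mem_sdiff.2 ⟨hi, hF⟩, rfl⟩), rfl⟩

lemma enc_F {S F : Finset ℕ} :
    ((enc S F).filter (fun v => v.2 = 1)).image Prod.fst = F := by
  ext i
  rw [Finset.mem_image]
  constructor
  · rintro ⟨v, hv, rfl⟩
    rw [Finset.mem_filter] at hv
    rcases mem_enc.1 hv.1 with ⟨h1, _⟩ | ⟨_, h2⟩
    · exact h1
    · rw [h2] at hv; exact absurd hv.2 (by norm_num)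
  · intro hi
    exact ⟨(i, 1), Finset.mem_filter.2 ⟨mem_enc.2 (Or.inl ⟨hi, rfl⟩), rfl⟩, rfl⟩

lemma enc_card {S F : Finset ℕ} (h : F ⊆ S) : (enc S F).card = S.card := by
  unfold enc
  rw [Finset.card_union_of_disjoint, Finset.card_image_of_injective, Finset.card_image_of_injective]
  · rw [Finset.card_sdiff_of_subset h]
    have := Finset.card_le_card h
    omega
  · intro a b hab; simpa using hab
  · intro a b hab; simpa using hab
  · rw [Finset.disjoint_left]
    rintro v hv1 hv2
    rw [Finset.mem_image] at hv1 hv2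
    obtain ⟨i, _, rfl⟩ := hv1
    obtain ⟨j, _, h⟩ := hv2
    simp at h

lemma enc_valid {n r : ℕ} {S F : Finset ℕ} (hS : S ⊆ Finset.Icc 1 n) (hc : S.card = r)
    (h : F ⊆ S) : enc S F ∈ sValid n r := by
  rw [mem_sValid]
  refine ⟨⟨?_, by rw [enc_card h, hc]⟩, ?_⟩
  · intro v hv
    rw [mem_sGrid]
    rcases mem_enc.1 hv with ⟨h1, h2⟩ | ⟨h1, h2⟩
    · have := Finset.mem_Icc.1 (hS (h h1))
      exact ⟨this, Or.inl h2⟩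
    · have := Finset.mem_Icc.1 (hS ((Finset.mem_sdiff.1 h1).1))
      exact ⟨this, Or.inr h2⟩
  · intro v hv w hw hfst
    rcases mem_enc.1 hv with ⟨h1, h2⟩ | ⟨h1, h2⟩ <;>
      rcases mem_enc.1 hw with ⟨h3, h4⟩ | ⟨h3, h4⟩
    · exact Prod.ext hfst (h2.trans h4.symm)
    · rw [hfst] at h1; exact absurd h1 (Finset.mem_sdiff.1 h3).2.elim
    · rw [← hfst] at h3; exact absurd h3 (Finset.mem_sdiff.1 h1).2.elim
    · exact Prod.ext hfst (h2.trans h4.symm)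

lemma sValid_decomp {n r : ℕ} {I : Finset (ℕ × ℕ)} (hI : I ∈ sValid n r) :
    I = enc (I.image Prod.fst) ((I.filter (fun v => v.2 = 1)).image Prod.fst) ∧
    ((I.filter (fun v => v.2 = 1)).image Prod.fst) ⊆ I.image Prod.fst := by
  rw [mem_sValid] at hI
  obtain ⟨⟨hsub, hcard⟩, hinj⟩ := hI
  set F := (I.filter (fun v => v.2 = 1)).image Prod.fst with hF
  set S := I.image Prod.fst with hS
  have hFS : F ⊆ S := by
    intro i hi
    rw [hF, Finset.mem_image] at hi
    obtain ⟨v, hv, rfl⟩ := hi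
    rw [Finset.mem_filter] at hv
    exact Finset.mem_image.2 ⟨v, hv.1, rfl⟩
  refine ⟨?_, hFS⟩
  ext v
  constructor
  · intro hv
    have hg := mem_sGrid.1 (hsub hv)
    rw [mem_enc]
    rcases hg.2 with h2 | h2
    · left
      refine ⟨?_, h2⟩
      rw [hF, Finset.mem_image]
      exact ⟨v, Finset.mem_filter.2 ⟨hv, h2⟩, rfl⟩
    · right
      refine ⟨Finset.mem_sdiff.2 ⟨Finset.mem_image.2 ⟨v, hv, rfl⟩, ?_⟩, h2⟩
      intro hcon
      rw [hF, Finset.mem_image] at hcon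
      obtain ⟨w, hw, hww⟩ := hcon
      rw [Finset.mem_filter] at hw
      have := hinj w hw.1 v hv hww
      rw [this] at hw
      omega
  · intro hv
    rcases mem_enc.1 hv with ⟨h1, h2⟩ | ⟨h1, h2⟩
    · rw [hF, Finset.mem_image] at h1
      obtain ⟨w, hw, hww⟩ := h1
      rw [Finset.mem_filter] at hw
      have : w = v := by
        refine Prod.ext hww ?_
        rw [hw.2, h2]
      rw [← this]; exact hw.1
    · rw [Finset.mem_sdiff] at h1
      obtain ⟨hs, hnf⟩ := h1
      rw [hS, Finset.mem_image] at hs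
      obtain ⟨w, hw, hww⟩ := hs
      have hwg := mem_sGrid.1 (hsub hw)
      rcases hwg.2 with h3 | h3
      · exfalso
        apply hnf
        rw [hF, Finset.mem_image]
        exact ⟨w, Finset.mem_filter.2 ⟨hw, h3⟩, hww⟩
      · have : w = v := by
          refine Prod.ext hww ?_
          rw [h3, h2]
        rwa [← this]

lemma sValid_eq_biUnion (n r : ℕ) :
    sValid n r = ((Finset.Icc 1 n).powersetCard r).biUnion
      (fun S => S.powerset.image (enc S)) := by
  ext I
  rw [Finset.mem_biUnion]
  constructor
  · intro hI
    obtain ⟨hdec, hFS⟩ := sValid_decomp hI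
    refine ⟨I.image Prod.fst, ?_, ?_⟩
    · rw [Finset.mem_powersetCard]
      rw [mem_sValid] at hI
      constructor
      · intro i hi
        rw [Finset.mem_image] at hi
        obtain ⟨v, hv, rfl⟩ := hi
        exact Finset.mem_Icc.2 (mem_sGrid.1 (hI.1.1 hv)).1
      · rw [Finset.card_image_of_injOn (fun v hv w hw h => hI.2 v hv w hw h), hI.1.2]
    · rw [Finset.mem_image]
      exact ⟨_, Finset.mem_powerset.2 hFS, hdec.symm⟩
  · rintro ⟨S, hS, hI⟩
    rw [Finset.mem_image] at hI
    obtain ⟨F, hF, rfl⟩ := hI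
    rw [Finset.mem_powersetCard] at hS
    exact enc_valid hS.1 hS.2 (Finset.mem_powerset.1 hF)

lemma card_sValid (n r : ℕ) : (sValid n r).card = n.choose r * 2 ^ r := by
  rw [sValid_eq_biUnion]
  rw [Finset.card_biUnion]
  · have : ∀ S ∈ (Finset.Icc 1 n).powersetCard r, (S.powerset.image (enc S)).card = 2 ^ r := by
      intro S hS
      rw [Finset.mem_powersetCard] at hS
      rw [Finset.card_image_of_injOn, Finset.card_powerset, hS.2]
      intro F hF F' hF' h
      rw [Finset.mem_coe, Finset.mem_powerset] at hF hF'
      rw [← enc_F (S := S) (F := F), ← enc_F (S := S) (F := F'), h]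
    rw [Finset.sum_congr rfl this, Finset.sum_const, Finset.card_powersetCard,
      Nat.card_Icc, smul_eq_mul]
    norm_num
  · intro S hS S' hS' hne
    rw [Function.onFun, Finset.disjoint_left]
    rintro I hI hI'
    rw [Finset.mem_image] at hI hI'
    obtain ⟨F, hF, rfl⟩ := hI
    obtain ⟨F', hF', heq⟩ := hI'
    rw [Finset.mem_powerset] at hF hF'
    apply hne
    rw [← enc_supp hF, ← heq, enc_supp hF']

lemma card_sValid_star (n r : ℕ) (hn : 1 ≤ n) (hr : 1 ≤ r) :
    ((sValid n r).filter (fun I => (1, 1) ∈ I)).card =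
      (n - 1).choose (r - 1) * 2 ^ (r - 1) := by
  classical
  -- bijection with pairs (S₀, F₀), S₀ ⊆ Icc 2 n of card r-1, F₀ ⊆ S₀
  have key : (sValid n r).filter (fun I => (1, 1) ∈ I) =
      ((Finset.Icc 2 n).powersetCard (r - 1)).biUnion
        (fun S₀ => S₀.powerset.image (fun F₀ => enc (insert 1 S₀) (insert 1 F₀))) := by
    ext I
    rw [Finset.mem_filter, Finset.mem_biUnion]
    constructor
    · rintro ⟨hI, h11⟩
      obtain ⟨hdec, hFS⟩ := sValid_decomp hI
      set S := I.image Prod.fst with hSdef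
      set F := (I.filter (fun v => v.2 = 1)).image Prod.fst with hFdef
      have h1F : 1 ∈ F := by
        rw [hFdef, Finset.mem_image]
        exact ⟨(1,1), Finset.mem_filter.2 ⟨h11, rfl⟩, rfl⟩
      have h1S : 1 ∈ S := hFS h1F
      have hI' := mem_sValid.1 hI
      refine ⟨S.erase 1, ?_, ?_⟩
      · rw [Finset.mem_powersetCard]
        constructor
        · intro i hi
          rw [Finset.mem_erase] at hi
          have : i ∈ Finset.Icc 1 n := by
            rw [hSdef, Finset.mem_image] at hi
            obtain ⟨_, ⟨v, hv, rfl⟩⟩ := hi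
            exact Finset.mem_Icc.2 (mem_sGrid.1 (hI'.1.1 hv)).1
          rw [Finset.mem_Icc] at this ⊢
          have hi1 := hi.1
          omega
        · rw [Finset.card_erase_of_mem h1S]
          rw [hSdef, Finset.card_image_of_injOn (fun v hv w hw h => hI'.2 v hv w hw h), hI'.1.2]
      · rw [Finset.mem_image]
        refine ⟨F.erase 1, ?_, ?_⟩
        · rw [Finset.mem_powerset]
          intro i hi
          rw [Finset.mem_erase] at hi ⊢
          exact ⟨hi.1, hFS hi.2⟩
        · rw [Finset.insert_erase h1F, Finset.insert_erase h1S]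
          exact hdec.symm
    · rintro ⟨S₀, hS₀, hI⟩
      rw [Finset.mem_image] at hI
      obtain ⟨F₀, hF₀, rfl⟩ := hI
      rw [Finset.mem_powersetCard] at hS₀
      rw [Finset.mem_powerset] at hF₀
      have h1S₀ : 1 ∉ S₀ := by
        intro h
        have := Finset.mem_Icc.1 (hS₀.1 h)
        omega
      have hsub : insert 1 S₀ ⊆ Finset.Icc 1 n := by
        intro i hi
        rcases Finset.mem_insert.1 hi with rfl | hi
        · exact Finset.mem_Icc.2 ⟨le_refl 1, hn⟩
        · have := Finset.mem_Icc.1 (hS₀.1 hi)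
          exact Finset.mem_Icc.2 ⟨by omega, this.2⟩
      have hcard : (insert 1 S₀).card = r := by
        rw [Finset.card_insert_of_notMem h1S₀, hS₀.2]
        omega
      have hFsub : insert 1 F₀ ⊆ insert 1 S₀ := Finset.insert_subset_insert _ hF₀
      refine ⟨enc_valid hsub hcard hFsub, ?_⟩
      exact mem_enc.2 (Or.inl ⟨Finset.mem_insert_self 1 _, rfl⟩)
  rw [key, Finset.card_biUnion]
  · have : ∀ S₀ ∈ (Finset.Icc 2 n).powersetCard (r - 1),
        ((S₀.powerset.image (fun F₀ => enc (insert 1 S₀) (insert 1 F₀)))).card = 2 ^ (r - 1) := by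
      intro S₀ hS₀
      rw [Finset.mem_powersetCard] at hS₀
      have h1S₀ : 1 ∉ S₀ := by
        intro h
        have := Finset.mem_Icc.1 (hS₀.1 h)
        omega
      rw [Finset.card_image_of_injOn, Finset.card_powerset, hS₀.2]
      intro F hF F' hF' h
      rw [Finset.mem_coe, Finset.mem_powerset] at hF hF'
      have h' : enc (insert 1 S₀) (insert 1 F) = enc (insert 1 S₀) (insert 1 F') := h
      have h2 : insert 1 F = insert 1 F' := by
        rw [← enc_F (S := insert 1 S₀) (F := insert 1 F), h', enc_F]
      have h1F : 1 ∉ F := fun hc => h1S₀ (hF hc)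
      have h1F' : 1 ∉ F' := fun hc => h1S₀ (hF' hc)
      ext i
      constructor
      · intro hi
        have : i ∈ insert 1 F' := by rw [← h2]; exact Finset.mem_insert_of_mem hi
        rcases Finset.mem_insert.1 this with rfl | hi'
        · exact absurd hi h1F
        · exact hi'
      · intro hi
        have : i ∈ insert 1 F := by rw [h2]; exact Finset.mem_insert_of_mem hi
        rcases Finset.mem_insert.1 this with rfl | hi'
        · exact absurd hi h1F'
        · exact hi'
    rw [Finset.sum_congr rfl this, Finset.sum_const, Finset.card_powersetCard,
      Nat.card_Icc, smul_eq_mul]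
    have h21 : n + 1 - 2 = n - 1 := by omega
    rw [h21]
  · intro S hS S' hS' hne
    rw [Function.onFun, Finset.disjoint_left]
    rintro I hI hI'
    rw [Finset.mem_image] at hI hI'
    obtain ⟨F, hF, rfl⟩ := hI
    obtain ⟨F', hF', heq⟩ := hI'
    rw [Finset.mem_coe, Finset.mem_powersetCard] at hS hS'
    rw [Finset.mem_powerset] at hF hF'
    have h1S : 1 ∉ S := by
      intro h; have := Finset.mem_Icc.1 (hS.1 h); omega
    have h1S' : 1 ∉ S' := by
      intro h; have := Finset.mem_Icc.1 (hS'.1 h); omega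
    apply hne
    have h2 : insert 1 S = insert 1 S' := by
      rw [← enc_supp (Finset.insert_subset_insert _ hF),
        ← heq, enc_supp (Finset.insert_subset_insert _ hF')]
    ext i
    constructor
    · intro hi
      have : i ∈ insert 1 S' := by rw [← h2]; exact Finset.mem_insert_of_mem hi
      rcases Finset.mem_insert.1 this with rfl | hi'
      · exact absurd hi h1S
      · exact hi'
    · intro hi
      have : i ∈ insert 1 S := by rw [h2]; exact Finset.mem_insert_of_mem hi
      rcases Finset.mem_insert.1 this with rfl | hi'
      · exact absurd hi h1S'
      · exact hi'

end Counting


section SigTheorem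

/-- **Signed Erdős–Ko–Rado**. -/
theorem signed_EKR (n r : ℕ) (hn : 0 < n) (hr : 1 ≤ r) (hrn : r ≤ n)
    (ℬ : Finset (Finset (ℕ × ℕ))) (hB : ℬ ⊆ sValid n r)
    (hint : ∀ A ∈ ℬ, ∀ B ∈ ℬ, (A ∩ B).Nonempty) :
    ℬ.card ≤ (n - 1).choose (r - 1) * 2 ^ (r - 1) := by
  haveI : NeZero (2 * n) := ⟨by omega⟩
  have key := cycle_bound (m := 2 * n) (L := r) (by omega) hr (by omega)
    (sArr n) (sArr_nonempty hn)
    (fun β hβ => (mem_sArr.1 hβ).2.1)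
    (sValid n r)
    (fun β hβ p => sArr_interval_valid hn hrn hβ p)
    (sValid_trans hn)
    ℬ hB hint
  rw [card_sValid] at key
  -- arithmetic : r * (C(n,r) * 2^r) = (2n) * (C(n-1,r-1) * 2^(r-1))
  have choose_id : n * (n - 1).choose (r - 1) = n.choose r * r := by
    have := Nat.add_one_mul_choose_eq (n - 1) (r - 1)
    have h1 : n - 1 + 1 = n := by omega
    have h2 : r - 1 + 1 = r := by omega
    rwa [h1, h2] at this
  have pow_id : 2 ^ r = 2 * 2 ^ (r - 1) := by
    conv_lhs => rw [show r = (r - 1) + 1 by omega]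
    rw [pow_succ]
    ring
  have arith : r * (n.choose r * 2 ^ r) = ((n - 1).choose (r - 1) * 2 ^ (r - 1)) * (2 * n) := by
    rw [pow_id]
    calc r * (n.choose r * (2 * 2 ^ (r - 1)))
        = (n.choose r * r) * 2 ^ (r - 1) * 2 := by ring
      _ = (n * (n - 1).choose (r - 1)) * 2 ^ (r - 1) * 2 := by rw [choose_id]
      _ = ((n - 1).choose (r - 1) * 2 ^ (r - 1)) * (2 * n) := by ring
  rw [arith] at key
  exact Nat.le_of_mul_le_mul_right key (by omega)

/-- Erdős–Ko–Rado transferred to subsets of `Icc 1 N ⊆ ℕ`. -/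
theorem ekr_nat (N k : ℕ) (hk : 1 ≤ k) (h2k : 2 * k ≤ N)
    (𝒢 : Finset (Finset ℕ)) (hsub : ∀ P ∈ 𝒢, P ⊆ Finset.Icc 1 N ∧ P.card = k)
    (hint : ∀ P ∈ 𝒢, ∀ Q ∈ 𝒢, (P ∩ Q).Nonempty) :
    𝒢.card ≤ (N - 1).choose (k - 1) := by
  classical
  set Φ : Finset ℕ → Finset (Fin N) :=
    fun P => Finset.univ.filter (fun x : Fin N => x.val + 1 ∈ P) with hΦ
  have hrec : ∀ P ∈ 𝒢, ∀ i, i ∈ P ↔ ∃ x : Fin N, x ∈ Φ P ∧ x.val + 1 = i := by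
    intro P hP i
    constructor
    · intro hi
      have hI := Finset.mem_Icc.1 ((hsub P hP).1 hi)
      refine ⟨⟨i - 1, by omega⟩, ?_, by simp only [Fin.val_mk]; omega⟩
      rw [hΦ, Finset.mem_filter]
      refine ⟨Finset.mem_univ _, ?_⟩
      simp only
      have : i - 1 + 1 = i := by omega
      rwa [this]
    · rintro ⟨x, hx, rfl⟩
      rw [hΦ, Finset.mem_filter] at hx
      exact hx.2
  have hinjΦ : Set.InjOn Φ 𝒢 := by
    intro P hP Q hQ h
    ext i
    rw [hrec P hP i, hrec Q hQ i, h]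
  have hcardΦ : ∀ P ∈ 𝒢, (Φ P).card = k := by
    intro P hP
    rw [← (hsub P hP).2]
    apply Finset.card_bij (fun x _ => x.val + 1)
    · intro x hx
      rw [hΦ, Finset.mem_filter] at hx
      exact hx.2
    · intro x hx y hy h
      exact Fin.ext (by omega)
    · intro i hi
      obtain ⟨x, hx, hxi⟩ := (hrec P hP i).1 hi
      exact ⟨x, hx, hxi⟩
  set 𝒢' : Finset (Finset (Fin N)) := 𝒢.image Φ with h𝒢'
  have hcard : 𝒢'.card = 𝒢.card := Finset.card_image_of_injOn hinjΦ
  have hI : (↑𝒢' : Set (Finset (Fin N))).Intersecting := by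
    intro A hA B hB
    rw [h𝒢', Finset.coe_image] at hA hB
    obtain ⟨P, hP, rfl⟩ := hA
    obtain ⟨Q, hQ, rfl⟩ := hB
    obtain ⟨i, hi⟩ := hint P hP Q hQ
    rw [Finset.mem_inter] at hi
    obtain ⟨x, hx, _⟩ := (hrec P hP i).1 hi.1
    obtain ⟨y, hy, hyeq⟩ := (hrec Q hQ i).1 hi.2
    rw [Finset.disjoint_left]
    intro hcon
    have hxy : x = y := Fin.ext (by omega)
    exact hcon hx (hxy ▸ hy)
  have hS : Set.Sized k (↑𝒢' : Set (Finset (Fin N))) := by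
    intro A hA
    rw [h𝒢', Finset.coe_image] at hA
    obtain ⟨P, hP, rfl⟩ := hA
    exact hcardΦ P hP
  have := Finset.erdos_ko_rado hI hS (by omega)
  omega

end SigTheorem

section Plumbing

variable {n r : ℕ}

lemma pair_eq_of_snd {v : ℕ × ℕ} {c : ℕ} (h : v.2 = c) : v = (v.1, c) := by
  rw [← h]

lemma claw_adj_iff {u v : ℕ × ℕ} : (depthTwoClaw n).Adj u v ↔
    ∃ i, 1 ≤ i ∧ i ≤ n ∧
      ((u = (0, 0) ∧ v = (i, 2)) ∨ (v = (0, 0) ∧ u = (i, 2)) ∨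
       (u = (i, 1) ∧ v = (i, 2)) ∨ (v = (i, 1) ∧ u = (i, 2))) := by
  unfold depthTwoClaw
  rw [SimpleGraph.fromEdgeSet_adj]
  constructor
  · rintro ⟨hmem, hne⟩
    simp only [Set.mem_setOf_eq] at hmem
    obtain ⟨i, hi, h | h⟩ := hmem
    · rw [Finset.mem_Icc] at hi
      rw [Sym2.eq_iff] at h
      rcases h with ⟨h1, h2⟩ | ⟨h1, h2⟩
      · exact ⟨i, hi.1, hi.2, Or.inl ⟨h1, h2⟩⟩
      · exact ⟨i, hi.1, hi.2, Or.inr (Or.inl ⟨h2, h1⟩)⟩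
    · rw [Finset.mem_Icc] at hi
      rw [Sym2.eq_iff] at h
      rcases h with ⟨h1, h2⟩ | ⟨h1, h2⟩
      · exact ⟨i, hi.1, hi.2, Or.inr (Or.inr (Or.inl ⟨h1, h2⟩))⟩
      · exact ⟨i, hi.1, hi.2, Or.inr (Or.inr (Or.inr ⟨h2, h1⟩))⟩
  · rintro ⟨i, hi1, hi2, hcase⟩
    have hii : i ∈ Finset.Icc 1 n := Finset.mem_Icc.2 ⟨hi1, hi2⟩
    constructor
    · simp only [Set.mem_setOf_eq]
      refine ⟨i, hii, ?_⟩
      rcases hcase with ⟨h1, h2⟩ | ⟨h1, h2⟩ | ⟨h1, h2⟩ | ⟨h1, h2⟩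
      · left; rw [h1, h2]
      · left; rw [h1, h2, Sym2.eq_swap]
      · right; rw [h1, h2]
      · right; rw [h1, h2, Sym2.eq_swap]
    · rcases hcase with ⟨h1, h2⟩ | ⟨h1, h2⟩ | ⟨h1, h2⟩ | ⟨h1, h2⟩ <;> rw [h1, h2] <;>
        simp only [ne_eq, Prod.mk.injEq] <;> omega

lemma mem_claw_indep {I : Finset (ℕ × ℕ)} : I ∈ depthTwoClawIndep n r ↔
    I ⊆ depthTwoClawVerts n ∧ I.card = r ∧
      ∀ u ∈ I, ∀ v ∈ I, ¬ (depthTwoClaw n).Adj u v := by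
  classical
  unfold depthTwoClawIndep
  rw [Finset.mem_filter, Finset.mem_powerset]

lemma mem_claw_verts {v : ℕ × ℕ} : v ∈ depthTwoClawVerts n ↔
    v = (0, 0) ∨ v ∈ sGrid n := by
  unfold depthTwoClawVerts sGrid
  rw [Finset.mem_insert]

lemma x0_not_mem_sGrid : ((0 : ℕ), (0 : ℕ)) ∉ sGrid n := by
  rw [mem_sGrid]; omega

/-- independent sets without `x₀` are exactly valid signed sets -/
lemma indep_without_x0 {I : Finset (ℕ × ℕ)} (hI : I ∈ depthTwoClawIndep n r)
    (h0 : ((0 : ℕ), (0 : ℕ)) ∉ I) : I ∈ sValid n r := by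
  rw [mem_claw_indep] at hI
  obtain ⟨hsub, hcard, hind⟩ := hI
  rw [mem_sValid]
  have hgrid : I ⊆ sGrid n := by
    intro v hv
    rcases mem_claw_verts.1 (hsub hv) with h | h
    · exact absurd (h ▸ hv) h0
    · exact h
  refine ⟨⟨hgrid, hcard⟩, ?_⟩
  intro v hv w hw hfst
  by_contra hne
  have hvg := mem_sGrid.1 (hgrid hv)
  have hwg := mem_sGrid.1 (hgrid hw)
  -- v,w same fst, different: one is (i,1), other (i,2): adjacent
  have : v.2 ≠ w.2 := by
    intro h
    exact hne (Prod.ext hfst h)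
  rcases hvg.2 with h1 | h1 <;> rcases hwg.2 with h2 | h2
  · omega
  · -- v=(i,1), w=(i,2)
    apply hind v hv w hw
    rw [claw_adj_iff]
    exact ⟨v.1, hvg.1.1, hvg.1.2, Or.inr (Or.inr (Or.inl
      ⟨pair_eq_of_snd h1, by rw [hfst]; exact pair_eq_of_snd h2⟩))⟩
  · apply hind v hv w hw
    rw [claw_adj_iff]
    exact ⟨v.1, hvg.1.1, hvg.1.2, Or.inr (Or.inr (Or.inr
      ⟨by rw [hfst]; exact pair_eq_of_snd h2, pair_eq_of_snd h1⟩))⟩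
  · omega

lemma sValid_indep {I : Finset (ℕ × ℕ)} (hI : I ∈ sValid n r) :
    I ∈ depthTwoClawIndep n r := by
  rw [mem_sValid] at hI
  obtain ⟨⟨hgrid, hcard⟩, hinj⟩ := hI
  rw [mem_claw_indep]
  refine ⟨fun v hv => mem_claw_verts.2 (Or.inr (hgrid hv)), hcard, ?_⟩
  intro u hu v hv hadj
  rw [claw_adj_iff] at hadj
  obtain ⟨i, hi1, hi2, hcase⟩ := hadj
  rcases hcase with ⟨h1, h2⟩ | ⟨h1, h2⟩ | ⟨h1, h2⟩ | ⟨h1, h2⟩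
  · subst h1; exact absurd (mem_sGrid.1 (hgrid hu)) (by omega)
  · subst h1; exact absurd (mem_sGrid.1 (hgrid hv)) (by omega)
  · subst h1; subst h2
    have := hinj _ hu _ hv rfl
    simp at this
  · subst h1; subst h2
    have := hinj _ hu _ hv rfl
    simp at this

def Asupp (I : Finset (ℕ × ℕ)) : Finset ℕ := (I.erase ((0 : ℕ), (0 : ℕ))).image Prod.fst

def Aenc (P : Finset ℕ) : Finset (ℕ × ℕ) :=
  insert ((0 : ℕ), (0 : ℕ)) (P.image (fun i => (i, 1)))

/-- all-`x` (signed) set on support `S` -/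
def Xall (S : Finset ℕ) : Finset (ℕ × ℕ) := S.image (fun i => (i, 1))

lemma x0_not_mem_Xall {S : Finset ℕ} : ((0 : ℕ), (0 : ℕ)) ∉ Xall S := by
  unfold Xall
  rw [Finset.mem_image]
  rintro ⟨i, _, h⟩
  simp at h

/-- structure of independent sets containing `x₀` -/
lemma indep_with_x0 {I : Finset (ℕ × ℕ)} (hI : I ∈ depthTwoClawIndep n r)
    (h0 : ((0 : ℕ), (0 : ℕ)) ∈ I) :
    I = Aenc (Asupp I) ∧ Asupp I ⊆ Finset.Icc 1 n ∧ (Asupp I).card = r - 1 ∧ 1 ≤ r := by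
  rw [mem_claw_indep] at hI
  obtain ⟨hsub, hcard, hind⟩ := hI
  have hmem1 : ∀ v ∈ I, v ≠ ((0 : ℕ), (0 : ℕ)) → v.2 = 1 ∧ 1 ≤ v.1 ∧ v.1 ≤ n := by
    intro v hv hne
    rcases mem_claw_verts.1 (hsub hv) with h | h
    · exact absurd h hne
    · have hg := mem_sGrid.1 h
      rcases hg.2 with h1 | h1
      · exact ⟨h1, hg.1⟩
      · exfalso
        apply hind _ h0 v hv
        rw [claw_adj_iff]
        exact ⟨v.1, hg.1.1, hg.1.2, Or.inl ⟨rfl, pair_eq_of_snd h1⟩⟩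
  have herase : ∀ v ∈ I.erase ((0 : ℕ), (0 : ℕ)), v = (v.1, 1) ∧ 1 ≤ v.1 ∧ v.1 ≤ n := by
    intro v hv
    rw [Finset.mem_erase] at hv
    obtain ⟨h1, h2, h3⟩ := hmem1 v hv.2 hv.1
    exact ⟨pair_eq_of_snd h1, h2, h3⟩
  have hinjfst : Set.InjOn (Prod.fst : ℕ × ℕ → ℕ)
      ((I.erase ((0 : ℕ), (0 : ℕ)) : Finset (ℕ × ℕ)) : Set (ℕ × ℕ)) := by
    intro v hv w hw h
    rw [(herase v hv).1, (herase w hw).1, h]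
  constructor
  · -- I = Aenc (Asupp I)
    ext v
    unfold Aenc Asupp
    rw [Finset.mem_insert, Finset.mem_image]
    constructor
    · intro hv
      by_cases h : v = ((0 : ℕ), (0 : ℕ))
      · exact Or.inl h
      · right
        refine ⟨v.1, Finset.mem_image.2 ⟨v, Finset.mem_erase.2 ⟨h, hv⟩, rfl⟩, ?_⟩
        exact ((herase v (Finset.mem_erase.2 ⟨h, hv⟩)).1).symm
    · rintro (rfl | ⟨i, hi, rfl⟩)
      · exact h0
      · rw [Finset.mem_image] at hi
        obtain ⟨w, hw, rfl⟩ := hi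
        rw [← (herase w hw).1]
        exact (Finset.mem_erase.1 hw).2
  refine ⟨?_, ?_, ?_⟩
  · intro i hi
    unfold Asupp at hi
    rw [Finset.mem_image] at hi
    obtain ⟨v, hv, rfl⟩ := hi
    exact Finset.mem_Icc.2 (herase v hv).2
  · unfold Asupp
    rw [Finset.card_image_of_injOn hinjfst, Finset.card_erase_of_mem h0, hcard]
  · rw [← hcard]
    exact Finset.card_pos.2 ⟨_, h0⟩

lemma Aenc_mem {P : Finset ℕ} {v : ℕ × ℕ} :
    v ∈ Aenc P ↔ v = ((0 : ℕ), (0 : ℕ)) ∨ ∃ i ∈ P, v = (i, 1) := by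
  unfold Aenc
  rw [Finset.mem_insert, Finset.mem_image]
  constructor
  · rintro (h | ⟨i, hi, rfl⟩)
    · exact Or.inl h
    · exact Or.inr ⟨i, hi, rfl⟩
  · rintro (h | ⟨i, hi, rfl⟩)
    · exact Or.inl h
    · exact Or.inr ⟨i, hi, rfl⟩

lemma Aenc_card {P : Finset ℕ} : (Aenc P).card = P.card + 1 := by
  unfold Aenc
  rw [Finset.card_insert_of_notMem, Finset.card_image_of_injective]
  · intro a b h; simpa using h
  · rw [Finset.mem_image]
    rintro ⟨i, _, h⟩
    simp at h

lemma Aenc_indep {P : Finset ℕ} (hP : P ⊆ Finset.Icc 1 n) (hc : P.card = r - 1)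
    (hr : 1 ≤ r) : Aenc P ∈ depthTwoClawIndep n r := by
  rw [mem_claw_indep]
  refine ⟨?_, ?_, ?_⟩
  · intro v hv
    rcases Aenc_mem.1 hv with rfl | ⟨i, hi, rfl⟩
    · exact Finset.mem_insert_self _ _
    · rw [mem_claw_verts, mem_sGrid]
      have := Finset.mem_Icc.1 (hP hi)
      exact Or.inr ⟨this, Or.inl rfl⟩
  · rw [Aenc_card, hc]; omega
  · intro u hu v hv hadj
    rw [claw_adj_iff] at hadj
    obtain ⟨i, hi1, hi2, hcase⟩ := hadj
    have key : ∀ w ∈ Aenc P, w ≠ (i, 2) := by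
      intro w hw
      rcases Aenc_mem.1 hw with rfl | ⟨q, _, rfl⟩ <;>
        simp only [ne_eq, Prod.mk.injEq] <;> omega
    rcases hcase with ⟨_, h2⟩ | ⟨_, h2⟩ | ⟨_, h2⟩ | ⟨_, h2⟩
    · exact key v hv h2
    · exact key u hu h2
    · exact key v hv h2
    · exact key u hu h2

lemma Asupp_Aenc {P : Finset ℕ} : Asupp (Aenc P) = P := by
  unfold Asupp
  ext i
  rw [Finset.mem_image]
  constructor
  · rintro ⟨v, hv, rfl⟩
    rw [Finset.mem_erase] at hv
    rcases Aenc_mem.1 hv.2 with h | ⟨q, hq, rfl⟩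
    · exact absurd h hv.1
    · exact hq
  · intro hi
    refine ⟨(i, 1), Finset.mem_erase.2 ⟨?_, Aenc_mem.2 (Or.inr ⟨i, hi, rfl⟩)⟩, rfl⟩
    simp only [ne_eq, Prod.mk.injEq, not_and]
    intro h
    omega

lemma Xall_mem {S : Finset ℕ} {v : ℕ × ℕ} : v ∈ Xall S ↔ ∃ i ∈ S, v = (i, 1) := by
  unfold Xall
  rw [Finset.mem_image]
  constructor
  · rintro ⟨i, hi, rfl⟩; exact ⟨i, hi, rfl⟩
  · rintro ⟨i, hi, rfl⟩; exact ⟨i, hi, rfl⟩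

lemma Xall_valid {S : Finset ℕ} (hS : S ⊆ Finset.Icc 1 n) (hc : S.card = r) :
    Xall S ∈ sValid n r := by
  rw [mem_sValid]
  refine ⟨⟨?_, ?_⟩, ?_⟩
  · intro v hv
    obtain ⟨i, hi, rfl⟩ := Xall_mem.1 hv
    rw [mem_sGrid]
    exact ⟨Finset.mem_Icc.1 (hS hi), Or.inl rfl⟩
  · unfold Xall
    rw [Finset.card_image_of_injective, hc]
    intro a b h; simpa using h
  · intro v hv w hw h
    obtain ⟨i, _, rfl⟩ := Xall_mem.1 hv
    obtain ⟨i', _, rfl⟩ := Xall_mem.1 hw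
    simp only at h
    rw [h]

end Plumbing

section Conclude

variable {n r : ℕ}

lemma starB_eq (n r : ℕ) :
    ((depthTwoClawIndep n r).filter
        (fun I => ((1 : ℕ), (1 : ℕ)) ∈ I)).filter (fun I => ((0 : ℕ), (0 : ℕ)) ∉ I) =
      (sValid n r).filter (fun I => ((1 : ℕ), (1 : ℕ)) ∈ I) := by
  classical
  ext I
  simp only [Finset.mem_filter]
  constructor
  · rintro ⟨⟨h1, h2⟩, h3⟩
    exact ⟨indep_without_x0 h1 h3, h2⟩
  · rintro ⟨h1, h2⟩
    refine ⟨⟨sValid_indep h1, h2⟩, ?_⟩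
    intro hc
    exact x0_not_mem_sGrid ((mem_sValid.1 h1).1.1 hc)

lemma star_lower (hn : 1 ≤ n) (hr : 2 ≤ r) :
    (n - 1).choose (r - 2) + (n - 1).choose (r - 1) * 2 ^ (r - 1) ≤
      ((depthTwoClawIndep n r).filter (fun I => ((1 : ℕ), (1 : ℕ)) ∈ I)).card := by
  classical
  set star := (depthTwoClawIndep n r).filter (fun I => ((1 : ℕ), (1 : ℕ)) ∈ I) with hstar
  have hsplit : (star.filter (fun I => ((0 : ℕ), (0 : ℕ)) ∈ I)).card +
      (star.filter (fun I => ¬ ((0 : ℕ), (0 : ℕ)) ∈ I)).card = star.card :=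
    Finset.card_filter_add_card_filter_not _
  have hB : (star.filter (fun I => ¬ ((0 : ℕ), (0 : ℕ)) ∈ I)).card =
      (n - 1).choose (r - 1) * 2 ^ (r - 1) := by
    rw [hstar, starB_eq, card_sValid_star n r hn (by omega)]
  have hA : (n - 1).choose (r - 2) ≤ (star.filter (fun I => ((0 : ℕ), (0 : ℕ)) ∈ I)).card := by
    have hcount : ((Finset.Icc 2 n).powersetCard (r - 2)).card = (n - 1).choose (r - 2) := by
      rw [Finset.card_powersetCard, Nat.card_Icc]
      have h21 : n + 1 - 2 = n - 1 := by omega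
      rw [h21]
    rw [← hcount]
    apply Finset.card_le_card_of_injOn (fun P₀ => Aenc (insert 1 P₀))
    · intro P₀ hP₀
      rw [Finset.mem_coe, Finset.mem_powersetCard] at hP₀
      have h1P₀ : 1 ∉ P₀ := by
        intro h
        have := Finset.mem_Icc.1 (hP₀.1 h)
        omega
      have hsub : insert 1 P₀ ⊆ Finset.Icc 1 n := by
        intro i hi
        rcases Finset.mem_insert.1 hi with rfl | hi
        · exact Finset.mem_Icc.2 ⟨le_refl 1, hn⟩
        · have := Finset.mem_Icc.1 (hP₀.1 hi)
          exact Finset.mem_Icc.2 ⟨by omega, this.2⟩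
      have hcard : (insert 1 P₀).card = r - 1 := by
        rw [Finset.card_insert_of_notMem h1P₀, hP₀.2]
        omega
      rw [hstar]
      simp only [Finset.mem_coe, Finset.mem_filter]
      refine ⟨⟨Aenc_indep hsub hcard (by omega), ?_⟩, ?_⟩
      · exact Aenc_mem.2 (Or.inr ⟨1, Finset.mem_insert_self _ _, rfl⟩)
      · exact Aenc_mem.2 (Or.inl rfl)
    · intro P hP Q hQ h
      have h' : Aenc (insert 1 P) = Aenc (insert 1 Q) := h
      have h2 : insert 1 P = insert 1 Q := by
        rw [← Asupp_Aenc (P := insert 1 P), h', Asupp_Aenc]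
      rw [Finset.mem_coe, Finset.mem_powersetCard] at hP hQ
      have h1P : 1 ∉ P := fun hc => by have := Finset.mem_Icc.1 (hP.1 hc); omega
      have h1Q : 1 ∉ Q := fun hc => by have := Finset.mem_Icc.1 (hQ.1 hc); omega
      ext i
      constructor
      · intro hi
        have : i ∈ insert 1 Q := by rw [← h2]; exact Finset.mem_insert_of_mem hi
        rcases Finset.mem_insert.1 this with rfl | h' 
        · exact absurd hi h1P
        · exact h'
      · intro hi
        have : i ∈ insert 1 P := by rw [h2]; exact Finset.mem_insert_of_mem hi
        rcases Finset.mem_insert.1 this with rfl | h'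
        · exact absurd hi h1Q
        · exact h'
  omega

/-- the concluding counting argument, given that the supports of the
`x₀`-sets are pairwise intersecting -/
lemma conclude (hn : 2 ≤ n) (hr : 2 ≤ r) (hrn : 2 * r - 2 ≤ n)
    (ℰ : Finset (Finset (ℕ × ℕ)))
    (hsub : ℰ ⊆ depthTwoClawIndep n r)
    (hint : ∀ A ∈ ℰ, ∀ B ∈ ℰ, (A ∩ B).Nonempty)
    (hAint : ∀ A ∈ ℰ, ((0 : ℕ), (0 : ℕ)) ∈ A → ∀ A' ∈ ℰ, ((0 : ℕ), (0 : ℕ)) ∈ A' →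
      (Asupp A ∩ Asupp A').Nonempty) :
    ℰ.card ≤ ((depthTwoClawIndep n r).filter (fun I => ((1 : ℕ), (1 : ℕ)) ∈ I)).card := by
  classical
  have hsplit : (ℰ.filter (fun I => ((0 : ℕ), (0 : ℕ)) ∈ I)).card +
      (ℰ.filter (fun I => ¬ ((0 : ℕ), (0 : ℕ)) ∈ I)).card = ℰ.card :=
    Finset.card_filter_add_card_filter_not _
  -- A-part
  have hApart : (ℰ.filter (fun I => ((0 : ℕ), (0 : ℕ)) ∈ I)).card ≤ (n - 1).choose (r - 2) := by
    have hinjA : Set.InjOn Asupp ((ℰ.filter (fun I => ((0 : ℕ), (0 : ℕ)) ∈ I) :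
        Finset (Finset (ℕ × ℕ))) : Set (Finset (ℕ × ℕ))) := by
      intro A hA A' hA' h
      rw [Finset.mem_coe, Finset.mem_filter] at hA hA'
      have h1 := indep_with_x0 (hsub hA.1) hA.2
      have h2 := indep_with_x0 (hsub hA'.1) hA'.2
      rw [h1.1, h2.1, h]
    have hcard : (ℰ.filter (fun I => ((0 : ℕ), (0 : ℕ)) ∈ I)).card =
        ((ℰ.filter (fun I => ((0 : ℕ), (0 : ℕ)) ∈ I)).image Asupp).card :=
      (Finset.card_image_of_injOn hinjA).symm
    rw [hcard]
    have := ekr_nat n (r - 1) (by omega) (by omega)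
      ((ℰ.filter (fun I => ((0 : ℕ), (0 : ℕ)) ∈ I)).image Asupp)
      (by
        intro P hP
        rw [Finset.mem_image] at hP
        obtain ⟨A, hA, rfl⟩ := hP
        rw [Finset.mem_filter] at hA
        have h1 := indep_with_x0 (hsub hA.1) hA.2
        exact ⟨h1.2.1, h1.2.2.1⟩)
      (by
        intro P hP Q hQ
        rw [Finset.mem_image] at hP hQ
        obtain ⟨A, hA, rfl⟩ := hP
        obtain ⟨A', hA', rfl⟩ := hQ
        rw [Finset.mem_filter] at hA hA'
        exact hAint A hA.1 hA.2 A' hA'.1 hA'.2)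
    have heq : r - 1 - 1 = r - 2 := by omega
    rwa [heq] at this
  -- B-part
  have hBpart : (ℰ.filter (fun I => ¬ ((0 : ℕ), (0 : ℕ)) ∈ I)).card ≤
      (n - 1).choose (r - 1) * 2 ^ (r - 1) := by
    apply signed_EKR n r (by omega) (by omega) (by omega)
    · intro I hI
      rw [Finset.mem_filter] at hI
      exact indep_without_x0 (hsub hI.1) hI.2
    · intro A hA B hB
      rw [Finset.mem_filter] at hA hB
      exact hint A hA.1 B hB.1
  have := star_lower (n := n) (r := r) (by omega) hr
  omega

end Conclude

section Compression

open UV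

variable {n r : ℕ}

lemma compress_Aenc (P : Finset ℕ) (j : ℕ) :
    (Aenc P ⊔ {((j : ℕ), (1 : ℕ))}) \ {((0 : ℕ), (0 : ℕ))} = Xall (insert j P) := by
  ext v
  rw [Finset.mem_sdiff, Finset.sup_eq_union, Finset.mem_union, Finset.mem_singleton,
    Finset.mem_singleton, Xall_mem]
  constructor
  · rintro ⟨h1 | h1, h2⟩
    · rcases Aenc_mem.1 h1 with h | ⟨i, hi, rfl⟩
      · exact absurd h h2
      · exact ⟨i, Finset.mem_insert_of_mem hi, rfl⟩
    · exact ⟨j, Finset.mem_insert_self _ _, h1⟩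
  · rintro ⟨i, hi, rfl⟩
    constructor
    · rcases Finset.mem_insert.1 hi with rfl | hi'
      · exact Or.inr rfl
      · exact Or.inl (Aenc_mem.2 (Or.inr ⟨i, hi', rfl⟩))
    · simp

lemma mem_Aenc_iff_x {P : Finset ℕ} {j : ℕ} : ((j : ℕ), (1 : ℕ)) ∈ Aenc P ↔ j ∈ P := by
  rw [Aenc_mem]
  constructor
  · rintro (h | ⟨i, hi, h⟩)
    · simp at h
    · rw [Prod.mk.injEq] at h
      rwa [h.1]
  · intro h
    exact Or.inr ⟨j, h, rfl⟩

/-- compress acts as expected on `x₀`-sets -/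
lemma compress_of_x0 {A : Finset (ℕ × ℕ)} {j : ℕ}
    (h0 : ((0 : ℕ), (0 : ℕ)) ∈ A) (hj : ((j : ℕ), (1 : ℕ)) ∉ A) :
    compress {((j : ℕ), (1 : ℕ))} {((0 : ℕ), (0 : ℕ))} A =
      (A ⊔ {((j : ℕ), (1 : ℕ))}) \ {((0 : ℕ), (0 : ℕ))} := by
  unfold compress
  rw [if_pos]
  exact ⟨Finset.disjoint_singleton_left.2 hj, Finset.singleton_subset_iff.2 h0⟩

lemma compress_no_x0 {A : Finset (ℕ × ℕ)} {j : ℕ}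
    (h : compress {((j : ℕ), (1 : ℕ))} {((0 : ℕ), (0 : ℕ))} A ≠ A) :
    ((0 : ℕ), (0 : ℕ)) ∈ A ∧ ((j : ℕ), (1 : ℕ)) ∉ A ∧
      compress {((j : ℕ), (1 : ℕ))} {((0 : ℕ), (0 : ℕ))} A =
        (A ⊔ {((j : ℕ), (1 : ℕ))}) \ {((0 : ℕ), (0 : ℕ))} := by
  unfold compress at h ⊢
  by_cases hc : Disjoint {((j : ℕ), (1 : ℕ))} A ∧ {((0 : ℕ), (0 : ℕ))} ≤ A
  · refine ⟨Finset.singleton_subset_iff.1 hc.2, Finset.disjoint_singleton_left.1 hc.1, ?_⟩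
    rw [if_pos hc]
  · exact absurd (if_neg hc) h

/-- the compressed family is still a family of independent sets -/
lemma compression_sub_indep {ℰ : Finset (Finset (ℕ × ℕ))} {j : ℕ}
    (hj : j ∈ Finset.Icc 1 n)
    (hsub : ℰ ⊆ depthTwoClawIndep n r) :
    compression {((j : ℕ), (1 : ℕ))} {((0 : ℕ), (0 : ℕ))} ℰ ⊆ depthTwoClawIndep n r := by
  intro X hX
  rcases (mem_compression.1 hX) with ⟨h1, _⟩ | ⟨h1, B, hB, hcomp⟩
  · exact hsub h1
  · have hBne : compress {((j : ℕ), (1 : ℕ))} {((0 : ℕ), (0 : ℕ))} B ≠ B := by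
      intro h
      rw [h] at hcomp
      exact h1 (hcomp ▸ hB)
    obtain ⟨h0, hjB, heq⟩ := compress_no_x0 hBne
    obtain ⟨hBenc, hPsub, hPcard, hr1⟩ := indep_with_x0 (hsub hB) h0
    rw [← hcomp, heq]
    have hjP : j ∉ Asupp B := fun h => hjB (by rw [hBenc]; exact mem_Aenc_iff_x.2 h)
    have : (B ⊔ {((j : ℕ), (1 : ℕ))}) \ {((0 : ℕ), (0 : ℕ))} = Xall (insert j (Asupp B)) := by
      conv_lhs => rw [hBenc]
      exact compress_Aenc _ _
    rw [this]
    apply sValid_indep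
    apply Xall_valid
    · intro i hi
      rcases Finset.mem_insert.1 hi with rfl | hi'
      · exact hj
      · exact hPsub hi'
    · rw [Finset.card_insert_of_notMem hjP, hPcard]
      omega

/-- the compressed family is still intersecting -/
lemma compression_intersecting {ℰ : Finset (Finset (ℕ × ℕ))} {j : ℕ}
    (hint : ∀ A ∈ ℰ, ∀ B ∈ ℰ, (A ∩ B).Nonempty) :
    ∀ X ∈ compression {((j : ℕ), (1 : ℕ))} {((0 : ℕ), (0 : ℕ))} ℰ,
    ∀ Y ∈ compression {((j : ℕ), (1 : ℕ))} {((0 : ℕ), (0 : ℕ))} ℰ,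
      (X ∩ Y).Nonempty := by
  -- helper : the mixed case
  have mixed : ∀ B ∈ ℰ,
      compress {((j : ℕ), (1 : ℕ))} {((0 : ℕ), (0 : ℕ))} B ∉ ℰ →
      ∀ Y ∈ ℰ, compress {((j : ℕ), (1 : ℕ))} {((0 : ℕ), (0 : ℕ))} Y ∈ ℰ →
      ((compress {((j : ℕ), (1 : ℕ))} {((0 : ℕ), (0 : ℕ))} B) ∩ Y).Nonempty := by
    intro B hB hBnot Y hY hYin
    have hBne : compress {((j : ℕ), (1 : ℕ))} {((0 : ℕ), (0 : ℕ))} B ≠ B := by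
      intro h
      rw [h] at hBnot
      exact hBnot hB
    obtain ⟨h0B, hjB, heqB⟩ := compress_no_x0 hBne
    rw [heqB]
    by_cases h0Y : ((0 : ℕ), (0 : ℕ)) ∈ Y
    · by_cases hjY : ((j : ℕ), (1 : ℕ)) ∈ Y
      · refine ⟨((j : ℕ), (1 : ℕ)), Finset.mem_inter.2 ⟨?_, hjY⟩⟩
        rw [Finset.mem_sdiff, Finset.sup_eq_union, Finset.mem_union]
        refine ⟨Or.inr (Finset.mem_singleton_self _), ?_⟩
        simp
      · -- Y is also movable; compress Y ∈ ℰ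
        have hYeq : compress {((j : ℕ), (1 : ℕ))} {((0 : ℕ), (0 : ℕ))} Y =
            (Y ⊔ {((j : ℕ), (1 : ℕ))}) \ {((0 : ℕ), (0 : ℕ))} := compress_of_x0 h0Y hjY
        rw [hYeq] at hYin
        obtain ⟨w, hw⟩ := hint B hB _ hYin
        rw [Finset.mem_inter] at hw
        have hw1 : w ∈ B := hw.1
        have hw2 : w ∈ (Y ⊔ {((j : ℕ), (1 : ℕ))}) \ {((0 : ℕ), (0 : ℕ))} := hw.2
        simp only [Finset.mem_sdiff, Finset.sup_eq_union, Finset.mem_union,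
          Finset.mem_singleton] at hw2
        have hwj : w ≠ ((j : ℕ), (1 : ℕ)) := fun h => hjB (h ▸ hw1)
        have hwY : w ∈ Y := by
          rcases hw2.1 with h | h
          · exact h
          · exact absurd h hwj
        refine ⟨w, Finset.mem_inter.2 ⟨?_, hwY⟩⟩
        simp only [Finset.mem_sdiff, Finset.sup_eq_union, Finset.mem_union,
          Finset.mem_singleton]
        exact ⟨Or.inl hw1, hw2.2⟩
    · obtain ⟨w, hw⟩ := hint B hB Y hY
      rw [Finset.mem_inter] at hw
      have hwne : w ≠ ((0 : ℕ), (0 : ℕ)) := fun h => h0Y (h ▸ hw.2)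
      refine ⟨w, Finset.mem_inter.2 ⟨?_, hw.2⟩⟩
      simp only [Finset.mem_sdiff, Finset.sup_eq_union, Finset.mem_union,
        Finset.mem_singleton]
      exact ⟨Or.inl hw.1, hwne⟩
  intro X hX Y hY
  rcases (mem_compression.1 hX) with ⟨hX1, _⟩ | ⟨hX1, B, hB, hcompB⟩ <;>
    rcases (mem_compression.1 hY) with ⟨hY1, hY2⟩ | ⟨hY1, D, hD, hcompD⟩
  · exact hint X hX1 Y hY1
  · -- X kept, Y moved
    have hDnot : compress {((j : ℕ), (1 : ℕ))} {((0 : ℕ), (0 : ℕ))} D ∉ ℰ := by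
      rw [hcompD]; exact hY1
    have hXin : compress {((j : ℕ), (1 : ℕ))} {((0 : ℕ), (0 : ℕ))} X ∈ ℰ :=
      (mem_compression.1 hX).elim (fun h => h.2) (fun h => absurd hX1 h.1.elim)
    have := mixed D hD hDnot X hX1 hXin
    rw [hcompD] at this
    obtain ⟨w, hw⟩ := this
    rw [Finset.mem_inter] at hw
    exact ⟨w, Finset.mem_inter.2 ⟨hw.2, hw.1⟩⟩
  · -- X moved, Y kept
    have hBnot : compress {((j : ℕ), (1 : ℕ))} {((0 : ℕ), (0 : ℕ))} B ∉ ℰ := by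
      rw [hcompB]; exact hX1
    have hYin : compress {((j : ℕ), (1 : ℕ))} {((0 : ℕ), (0 : ℕ))} Y ∈ ℰ :=
      (mem_compression.1 hY).elim (fun h => h.2) (fun h => absurd hY1 h.1.elim)
    have := mixed B hB hBnot Y hY1 hYin
    rwa [hcompB] at this
  · -- both moved : both contain (j,1)
    have hBne : compress {((j : ℕ), (1 : ℕ))} {((0 : ℕ), (0 : ℕ))} B ≠ B := by
      intro h; rw [h] at hcompB; exact hX1 (hcompB ▸ hB)
    have hDne : compress {((j : ℕ), (1 : ℕ))} {((0 : ℕ), (0 : ℕ))} D ≠ D := by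
      intro h; rw [h] at hcompD; exact hY1 (hcompD ▸ hD)
    obtain ⟨_, _, heqB⟩ := compress_no_x0 hBne
    obtain ⟨_, _, heqD⟩ := compress_no_x0 hDne
    refine ⟨((j : ℕ), (1 : ℕ)), Finset.mem_inter.2 ⟨?_, ?_⟩⟩
    · rw [← hcompB, heqB, Finset.mem_sdiff, Finset.sup_eq_union, Finset.mem_union]
      exact ⟨Or.inr (Finset.mem_singleton_self _), by simp⟩
    · rw [← hcompD, heqD, Finset.mem_sdiff, Finset.sup_eq_union, Finset.mem_union]
      exact ⟨Or.inr (Finset.mem_singleton_self _), by simp⟩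

/-- compression strictly reduces the number of `x₀`-sets when a violation exists -/
lemma compression_filter_lt {ℰ : Finset (Finset (ℕ × ℕ))} {j : ℕ}
    {A : Finset (ℕ × ℕ)} (hA : A ∈ ℰ) (h0A : ((0 : ℕ), (0 : ℕ)) ∈ A)
    (hjA : ((j : ℕ), (1 : ℕ)) ∉ A)
    (hmoved : compress {((j : ℕ), (1 : ℕ))} {((0 : ℕ), (0 : ℕ))} A ∉ ℰ) :
    ((compression {((j : ℕ), (1 : ℕ))} {((0 : ℕ), (0 : ℕ))} ℰ).filter
        (fun X => ((0 : ℕ), (0 : ℕ)) ∈ X)).card <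
      (ℰ.filter (fun X => ((0 : ℕ), (0 : ℕ)) ∈ X)).card := by
  classical
  have hsub2 : (compression {((j : ℕ), (1 : ℕ))} {((0 : ℕ), (0 : ℕ))} ℰ).filter
      (fun X => ((0 : ℕ), (0 : ℕ)) ∈ X) ⊆
      (ℰ.filter (fun X => ((0 : ℕ), (0 : ℕ)) ∈ X)).erase A := by
    intro X hX
    rw [Finset.mem_filter] at hX
    obtain ⟨hX1, hX0⟩ := hX
    rcases (mem_compression.1 hX1) with ⟨h1, h2⟩ | ⟨h1, B, hB, hcompB⟩
    · rw [Finset.mem_erase, Finset.mem_filter]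
      refine ⟨?_, h1, hX0⟩
      intro hXA
      subst hXA
      rw [compress_of_x0 h0A hjA] at h2
      apply hmoved
      rwa [compress_of_x0 h0A hjA]
    · exfalso
      have hBne : compress {((j : ℕ), (1 : ℕ))} {((0 : ℕ), (0 : ℕ))} B ≠ B := by
        intro h; rw [h] at hcompB; exact h1 (hcompB ▸ hB)
      obtain ⟨_, _, heqB⟩ := compress_no_x0 hBne
      rw [← hcompB, heqB, Finset.mem_sdiff, Finset.mem_singleton] at hX0
      exact hX0.2 rfl
  calc ((compression {((j : ℕ), (1 : ℕ))} {((0 : ℕ), (0 : ℕ))} ℰ).filter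
        (fun X => ((0 : ℕ), (0 : ℕ)) ∈ X)).card
      ≤ ((ℰ.filter (fun X => ((0 : ℕ), (0 : ℕ)) ∈ X)).erase A).card :=
        Finset.card_le_card hsub2
    _ < (ℰ.filter (fun X => ((0 : ℕ), (0 : ℕ)) ∈ X)).card := by
        apply Finset.card_erase_lt_of_mem
        rw [Finset.mem_filter]
        exact ⟨hA, h0A⟩

end Compression

section Stable

variable {n r : ℕ}

lemma Asupp_nonempty {ℰ : Finset (Finset (ℕ × ℕ))} (hsub : ℰ ⊆ depthTwoClawIndep n r)
    (hr : 2 ≤ r) {A : Finset (ℕ × ℕ)} (hA : A ∈ ℰ) (h0 : ((0 : ℕ), (0 : ℕ)) ∈ A) :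
    (Asupp A).Nonempty := by
  obtain ⟨_, _, hcard, _⟩ := indep_with_x0 (hsub hA) h0
  rw [← Finset.card_pos, hcard]
  omega

/-- If the family is stable under all `x₀`-compressions and `n ≥ 2r-1`, then
the supports of the `x₀`-sets pairwise intersect. -/
lemma stable_Aint (hn : 2 * r - 1 ≤ n) (hr : 2 ≤ r)
    {ℰ : Finset (Finset (ℕ × ℕ))} (hsub : ℰ ⊆ depthTwoClawIndep n r)
    (hint : ∀ A ∈ ℰ, ∀ B ∈ ℰ, (A ∩ B).Nonempty)
    (hstab : ∀ A ∈ ℰ, ((0 : ℕ), (0 : ℕ)) ∈ A → ∀ j ∈ Finset.Icc 1 n,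
      ((j : ℕ), (1 : ℕ)) ∉ A → Xall (insert j (Asupp A)) ∈ ℰ) :
    ∀ A ∈ ℰ, ((0 : ℕ), (0 : ℕ)) ∈ A → ∀ A' ∈ ℰ, ((0 : ℕ), (0 : ℕ)) ∈ A' →
      (Asupp A ∩ Asupp A').Nonempty := by
  intro A hA h0 A' hA' h0'
  by_contra hno
  rw [Finset.not_nonempty_iff_eq_empty] at hno
  obtain ⟨hAenc, hPsub, hPcard, _⟩ := indep_with_x0 (hsub hA) h0
  obtain ⟨hA'enc, hQsub, hQcard, _⟩ := indep_with_x0 (hsub hA') h0'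
  set P := Asupp A
  set Q := Asupp A'
  have hPQ : ∀ j ∈ Finset.Icc 1 n, j ∉ P → j ∈ Q := by
    intro j hjI hjP
    have hjA : ((j : ℕ), (1 : ℕ)) ∉ A := by
      intro h
      apply hjP
      rw [hAenc] at h
      exact mem_Aenc_iff_x.1 h
    have hX : Xall (insert j P) ∈ ℰ := hstab A hA h0 j hjI hjA
    obtain ⟨w, hw⟩ := hint _ hX A' hA'
    rw [Finset.mem_inter] at hw
    obtain ⟨q, hq, rfl⟩ := Xall_mem.1 hw.1
    have hqQ : q ∈ Q := by
      have := hw.2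
      rw [hA'enc] at this
      rcases Aenc_mem.1 this with h | ⟨i, hi, heq⟩
      · simp at h
      · rw [Prod.mk.injEq] at heq
        rwa [heq.1]
    rcases Finset.mem_insert.1 hq with rfl | hq'
    · exact hqQ
    · exfalso
      have : q ∈ P ∩ Q := Finset.mem_inter.2 ⟨hq', hqQ⟩
      rw [hno] at this
      exact absurd this (Finset.notMem_empty q)
  have hsubQ : Finset.Icc 1 n \ P ⊆ Q := by
    intro j hj
    rw [Finset.mem_sdiff] at hj
    exact hPQ j hj.1 hj.2
  have hcard1 : (Finset.Icc 1 n \ P).card = n - (r - 1) := by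
    rw [Finset.card_sdiff_of_subset hPsub, Nat.card_Icc, hPcard]
    omega
  have := Finset.card_le_card hsubQ
  rw [hcard1, hQcard] at this
  omega

end Stable

section Replacement

variable {n r : ℕ}

/-- the replacement sets `Z = {xᵩ : q ∈ P} ∪ {y_j}` -/
def Zset (P : Finset ℕ) (j : ℕ) : Finset (ℕ × ℕ) := enc (insert j P) P

lemma Zset_valid (hP : P ⊆ Finset.Icc 1 n) (hj : j ∈ Finset.Icc 1 n) (hjP : j ∉ P)
    (hc : P.card = r - 1) (hr : 1 ≤ r) : Zset P j ∈ sValid n r := by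
  apply enc_valid
  · intro i hi
    rcases Finset.mem_insert.1 hi with rfl | hi'
    · exact hj
    · exact hP hi'
  · rw [Finset.card_insert_of_notMem hjP, hc]
    omega
  · exact Finset.subset_insert _ _

lemma Zset_x_mem {P : Finset ℕ} {j q : ℕ} (hq : q ∈ P) : ((q : ℕ), (1 : ℕ)) ∈ Zset P j := by
  unfold Zset
  exact mem_enc.2 (Or.inl ⟨hq, rfl⟩)

lemma Zset_y_mem {P : Finset ℕ} {j : ℕ} (hjP : j ∉ P) : ((j : ℕ), (2 : ℕ)) ∈ Zset P j := by
  unfold Zset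
  exact mem_enc.2 (Or.inr ⟨Finset.mem_sdiff.2 ⟨Finset.mem_insert_self _ _, hjP⟩, rfl⟩)

lemma Zset_mem_iff {P : Finset ℕ} {j : ℕ} {v : ℕ × ℕ} (hjP : j ∉ P) :
    v ∈ Zset P j ↔ (v.1 ∈ P ∧ v.2 = 1) ∨ (v = ((j : ℕ), (2 : ℕ))) := by
  unfold Zset
  rw [mem_enc]
  constructor
  · rintro (⟨h1, h2⟩ | ⟨h1, h2⟩)
    · exact Or.inl ⟨h1, h2⟩
    · right
      rw [Finset.mem_sdiff] at h1
      rcases Finset.mem_insert.1 h1.1 with h | h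
      · rw [← h2, ← h]
      · exact absurd h h1.2
  · rintro (⟨h1, h2⟩ | rfl)
    · exact Or.inl ⟨h1, h2⟩
    · exact Or.inr ⟨Finset.mem_sdiff.2 ⟨Finset.mem_insert_self _ _, hjP⟩, rfl⟩

lemma Zset_x0_not_mem {P : Finset ℕ} {j : ℕ} (hjP : j ∉ P) :
    ((0 : ℕ), (0 : ℕ)) ∉ Zset P j := by
  rw [Zset_mem_iff hjP]
  rintro (⟨_, h⟩ | h)
  · exact absurd h (by norm_num)
  · have := congrArg Prod.snd h
    simp at this

end Replacement

section PairStep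

variable {n r : ℕ}

/-- In the `n = 2r-2` case, two `x₀`-sets with disjoint supports have
complementary supports. -/
lemma pair_structure (hn22 : n + 2 = 2 * r) (hr : 2 ≤ r)
    {ℰ : Finset (Finset (ℕ × ℕ))} (hsub : ℰ ⊆ depthTwoClawIndep n r)
    {A1 A2 : Finset (ℕ × ℕ)} (hA1 : A1 ∈ ℰ) (hA2 : A2 ∈ ℰ)
    (h01 : ((0 : ℕ), (0 : ℕ)) ∈ A1) (h02 : ((0 : ℕ), (0 : ℕ)) ∈ A2)
    (hdisj : Asupp A1 ∩ Asupp A2 = ∅) :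
    Asupp A2 = Finset.Icc 1 n \ Asupp A1 ∧ A1 ≠ A2 := by
  obtain ⟨hA1enc, hPsub, hPcard, _⟩ := indep_with_x0 (hsub hA1) h01
  obtain ⟨hA2enc, hQsub, hQcard, _⟩ := indep_with_x0 (hsub hA2) h02
  have hQsub2 : Asupp A2 ⊆ Finset.Icc 1 n \ Asupp A1 := by
    intro q hq
    rw [Finset.mem_sdiff]
    refine ⟨hQsub hq, ?_⟩
    intro hc
    have : q ∈ Asupp A1 ∩ Asupp A2 := Finset.mem_inter.2 ⟨hc, hq⟩
    rw [hdisj] at this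
    exact absurd this (Finset.notMem_empty q)
  have hcards : (Finset.Icc 1 n \ Asupp A1).card ≤ (Asupp A2).card := by
    rw [Finset.card_sdiff_of_subset hPsub, Nat.card_Icc, hPcard, hQcard]
    omega
  refine ⟨(Finset.eq_of_subset_of_card_le hQsub2 hcards).symm ▸ rfl, ?_⟩
  · intro h
    obtain ⟨q, hq⟩ : (Asupp A1).Nonempty := by
      rw [← Finset.card_pos, hPcard]; omega
    have : q ∈ Asupp A1 ∩ Asupp A2 := Finset.mem_inter.2 ⟨hq, h ▸ hq⟩
    rw [hdisj] at this
    exact absurd this (Finset.notMem_empty q)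

/-- every member other than `A2` contains an `x`-vertex over the support of `A1` -/
lemma meets_P (hn22 : n + 2 = 2 * r) (hr : 2 ≤ r)
    {ℰ : Finset (Finset (ℕ × ℕ))} (hsub : ℰ ⊆ depthTwoClawIndep n r)
    (hint : ∀ A ∈ ℰ, ∀ B ∈ ℰ, (A ∩ B).Nonempty)
    {A1 A2 : Finset (ℕ × ℕ)} (hA1 : A1 ∈ ℰ) (hA2 : A2 ∈ ℰ)
    (h01 : ((0 : ℕ), (0 : ℕ)) ∈ A1) (h02 : ((0 : ℕ), (0 : ℕ)) ∈ A2)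
    (hcompl : Asupp A2 = Finset.Icc 1 n \ Asupp A1) :
    ∀ W ∈ ℰ, W ≠ A2 → ∃ q ∈ Asupp A1, ((q : ℕ), (1 : ℕ)) ∈ W := by
  intro W hW hWne
  obtain ⟨hA1enc, hPsub, hPcard, _⟩ := indep_with_x0 (hsub hA1) h01
  obtain ⟨hA2enc, hQsub, hQcard, _⟩ := indep_with_x0 (hsub hA2) h02
  by_cases h0W : ((0 : ℕ), (0 : ℕ)) ∈ W
  · obtain ⟨hWenc, hRsub, hRcard, _⟩ := indep_with_x0 (hsub hW) h0W
    by_cases hRP : (Asupp W ∩ Asupp A1).Nonempty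
    · obtain ⟨q, hq⟩ := hRP
      rw [Finset.mem_inter] at hq
      refine ⟨q, hq.2, ?_⟩
      rw [hWenc]
      exact mem_Aenc_iff_x.2 hq.1
    · exfalso
      rw [Finset.not_nonempty_iff_eq_empty] at hRP
      have hRsub2 : Asupp W ⊆ Finset.Icc 1 n \ Asupp A1 := by
        intro q hq
        rw [Finset.mem_sdiff]
        refine ⟨hRsub hq, fun hc => ?_⟩
        have : q ∈ Asupp W ∩ Asupp A1 := Finset.mem_inter.2 ⟨hq, hc⟩
        rw [hRP] at this
        exact absurd this (Finset.notMem_empty q)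
      have hcards : (Finset.Icc 1 n \ Asupp A1).card ≤ (Asupp W).card := by
        rw [Finset.card_sdiff_of_subset hPsub, Nat.card_Icc, hPcard, hRcard]
        omega
      have hRQ : Asupp W = Asupp A2 := by
        rw [hcompl]
        exact Finset.eq_of_subset_of_card_le hRsub2 hcards
      apply hWne
      rw [hWenc, hA2enc, hRQ]
  · obtain ⟨w, hw⟩ := hint W hW A1 hA1
    rw [Finset.mem_inter] at hw
    have := hw.2
    rw [hA1enc] at this
    rcases Aenc_mem.1 this with h | ⟨i, hi, heq⟩
    · exact absurd (h ▸ hw.1) h0W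
    · exact ⟨i, hi, heq ▸ hw.1⟩

/-- the double replacement step in the `n = 2r-2` case -/
lemma replacement_step (hn22 : n + 2 = 2 * r) (hr3 : 3 ≤ r)
    {ℰ : Finset (Finset (ℕ × ℕ))} (hsub : ℰ ⊆ depthTwoClawIndep n r)
    (hint : ∀ A ∈ ℰ, ∀ B ∈ ℰ, (A ∩ B).Nonempty)
    {A1 A2 : Finset (ℕ × ℕ)} (hA1 : A1 ∈ ℰ) (hA2 : A2 ∈ ℰ)
    (h01 : ((0 : ℕ), (0 : ℕ)) ∈ A1) (h02 : ((0 : ℕ), (0 : ℕ)) ∈ A2)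
    (hdisj : Asupp A1 ∩ Asupp A2 = ∅) :
    ∃ ℰ' : Finset (Finset (ℕ × ℕ)), ℰ' ⊆ depthTwoClawIndep n r ∧
      (∀ A ∈ ℰ', ∀ B ∈ ℰ', (A ∩ B).Nonempty) ∧ ℰ'.card = ℰ.card ∧
      (ℰ'.filter (fun X => ((0 : ℕ), (0 : ℕ)) ∈ X)).card <
        (ℰ.filter (fun X => ((0 : ℕ), (0 : ℕ)) ∈ X)).card := by
  classical
  obtain ⟨hcompl, hA12ne⟩ := pair_structure hn22 (by omega) hsub hA1 hA2 h01 h02 hdisj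
  obtain ⟨hA1enc, hPsub, hPcard, _⟩ := indep_with_x0 (hsub hA1) h01
  obtain ⟨hA2enc, hQsub, hQcard, _⟩ := indep_with_x0 (hsub hA2) h02
  set P := Asupp A1 with hP
  set Q := Asupp A2 with hQ
  -- two distinct elements of Q
  have hQ2 : 1 < Q.card := by rw [hQcard]; omega
  obtain ⟨j₁, hj₁, j₂, hj₂, hjne⟩ := Finset.one_lt_card.1 hQ2
  have hj₁P : j₁ ∉ P := by
    intro h
    have : j₁ ∈ P ∩ Q := Finset.mem_inter.2 ⟨h, hj₁⟩
    rw [hdisj] at this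
    exact absurd this (Finset.notMem_empty _)
  have hj₂P : j₂ ∉ P := by
    intro h
    have : j₂ ∈ P ∩ Q := Finset.mem_inter.2 ⟨h, hj₂⟩
    rw [hdisj] at this
    exact absurd this (Finset.notMem_empty _)
  have hPne : P.Nonempty := by rw [← Finset.card_pos, hPcard]; omega
  -- Z sets are not in ℰ
  have hZnot : ∀ j, j ∉ P → Zset P j ∉ ℰ := by
    intro j hjP hc
    obtain ⟨w, hw⟩ := hint _ hc A2 hA2
    rw [Finset.mem_inter] at hw
    have hw2 := hw.2
    rw [hA2enc] at hw2
    rcases (Zset_mem_iff hjP).1 hw.1 with ⟨h1, h2⟩ | rfl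
    · rcases Aenc_mem.1 hw2 with h | ⟨i, hi, heq⟩
      · rw [h] at h2; exact absurd h2 (by norm_num)
      · have : w.1 ∈ P ∩ Q := by
          refine Finset.mem_inter.2 ⟨h1, ?_⟩
          rw [heq]
          exact hi
        rw [hdisj] at this
        exact absurd this (Finset.notMem_empty _)
    · rcases Aenc_mem.1 hw2 with h | ⟨i, hi, heq⟩
      · have := congrArg Prod.snd h; simp at this
      · have := congrArg Prod.snd heq; simp at this
  -- the new family
  set Z₁ := Zset P j₁ with hZ₁
  set Z₂ := Zset P j₂ with hZ₂
  have hZ12ne : Z₁ ≠ Z₂ := by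
    intro h
    have h1 : ((j₁ : ℕ), (2 : ℕ)) ∈ Z₂ := h ▸ Zset_y_mem hj₁P
    rcases (Zset_mem_iff hj₂P).1 h1 with ⟨_, h2⟩ | h2
    · exact absurd h2 (by norm_num)
    · rw [Prod.mk.injEq] at h2
      exact hjne h2.1
  set ℰ₀ := (ℰ.erase A1).erase A2 with hℰ₀
  have hmemE0 : ∀ W, W ∈ ℰ₀ ↔ W ∈ ℰ ∧ W ≠ A1 ∧ W ≠ A2 := by
    intro W
    rw [hℰ₀, Finset.mem_erase, Finset.mem_erase]
    tauto
  have hZ₁notE0 : Z₁ ∉ ℰ₀ := fun h => hZnot j₁ hj₁P ((hmemE0 _).1 h).1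
  have hZ₂notE0 : Z₂ ∉ ℰ₀ := fun h => hZnot j₂ hj₂P ((hmemE0 _).1 h).1
  set ℰ' := insert Z₁ (insert Z₂ ℰ₀) with hℰ'
  have hj₁Icc : j₁ ∈ Finset.Icc 1 n := hQsub hj₁
  have hj₂Icc : j₂ ∈ Finset.Icc 1 n := hQsub hj₂
  have hZ₁valid : Z₁ ∈ sValid n r := Zset_valid hPsub hj₁Icc hj₁P hPcard (by omega)
  have hZ₂valid : Z₂ ∈ sValid n r := Zset_valid hPsub hj₂Icc hj₂P hPcard (by omega)
  -- membership in ℰ' characterization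
  have hmemE' : ∀ W, W ∈ ℰ' ↔ W = Z₁ ∨ W = Z₂ ∨ W ∈ ℰ₀ := by
    intro W
    rw [hℰ', Finset.mem_insert, Finset.mem_insert]
  -- meets lemma
  have hmeets : ∀ W ∈ ℰ, W ≠ A2 → ∃ q ∈ P, ((q : ℕ), (1 : ℕ)) ∈ W :=
    meets_P hn22 (by omega) hsub hint hA1 hA2 h01 h02 hcompl
  refine ⟨ℰ', ?_, ?_, ?_, ?_⟩
  · -- subset of independent sets
    intro W hW
    rcases (hmemE' W).1 hW with rfl | rfl | h
    · exact sValid_indep hZ₁valid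
    · exact sValid_indep hZ₂valid
    · exact hsub ((hmemE0 W).1 h).1
  · -- intersecting
    have hZold : ∀ j, j ∉ P → ∀ W ∈ ℰ, W ≠ A2 → (W ∩ Zset P j).Nonempty := by
      intro j hjP W hW hWne
      obtain ⟨q, hq, hqW⟩ := hmeets W hW hWne
      exact ⟨((q : ℕ), (1 : ℕ)), Finset.mem_inter.2 ⟨hqW, Zset_x_mem hq⟩⟩
    have hZZ : ∀ j j', j ∉ P → j' ∉ P → (Zset P j ∩ Zset P j').Nonempty := by
      intro j j' hj hj'
      obtain ⟨q, hq⟩ := hPne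
      exact ⟨((q : ℕ), (1 : ℕ)), Finset.mem_inter.2 ⟨Zset_x_mem hq, Zset_x_mem hq⟩⟩
    intro X hX Y hY
    have swap : ∀ {U V : Finset (ℕ × ℕ)}, (U ∩ V).Nonempty → (V ∩ U).Nonempty := by
      intro U V ⟨w, hw⟩
      rw [Finset.mem_inter] at hw
      exact ⟨w, Finset.mem_inter.2 ⟨hw.2, hw.1⟩⟩
    rcases (hmemE' X).1 hX with rfl | rfl | hXo <;>
      rcases (hmemE' Y).1 hY with rfl | rfl | hYo
    · exact hZZ _ _ hj₁P hj₁P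
    · exact hZZ _ _ hj₁P hj₂P
    · exact swap (hZold j₁ hj₁P Y ((hmemE0 Y).1 hYo).1 ((hmemE0 Y).1 hYo).2.2)
    · exact hZZ _ _ hj₂P hj₁P
    · exact hZZ _ _ hj₂P hj₂P
    · exact swap (hZold j₂ hj₂P Y ((hmemE0 Y).1 hYo).1 ((hmemE0 Y).1 hYo).2.2)
    · exact hZold j₁ hj₁P X ((hmemE0 X).1 hXo).1 ((hmemE0 X).1 hXo).2.2
    · exact hZold j₂ hj₂P X ((hmemE0 X).1 hXo).1 ((hmemE0 X).1 hXo).2.2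
    · exact hint X ((hmemE0 X).1 hXo).1 Y ((hmemE0 Y).1 hYo).1
  · -- cardinality
    have hA2mem : A2 ∈ ℰ.erase A1 := Finset.mem_erase.2 ⟨fun h => hA12ne h.symm, hA2⟩
    have hc0 : ℰ₀.card = ℰ.card - 2 := by
      rw [hℰ₀, Finset.card_erase_of_mem hA2mem, Finset.card_erase_of_mem hA1]
      omega
    have hcE : 2 ≤ ℰ.card := by
      have : ({A1, A2} : Finset (Finset (ℕ × ℕ))) ⊆ ℰ := by
        intro W hW
        rcases Finset.mem_insert.1 hW with rfl | hW
        · exact hA1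
        · rw [Finset.mem_singleton.1 hW]; exact hA2
      have hcard2 : ({A1, A2} : Finset (Finset (ℕ × ℕ))).card = 2 := by
        rw [Finset.card_insert_of_notMem (by rwa [Finset.mem_singleton]),
          Finset.card_singleton]
      calc 2 = ({A1, A2} : Finset (Finset (ℕ × ℕ))).card := hcard2.symm
        _ ≤ ℰ.card := Finset.card_le_card this
    rw [hℰ', Finset.card_insert_of_notMem, Finset.card_insert_of_notMem hZ₂notE0, hc0]
    · omega
    · rw [Finset.mem_insert]
      rintro (h | h)
      · exact hZ12ne h
      · exact hZ₁notE0 h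
  · -- strictly fewer x₀-sets
    have hfsub : ℰ'.filter (fun X => ((0 : ℕ), (0 : ℕ)) ∈ X) ⊆
        (ℰ.filter (fun X => ((0 : ℕ), (0 : ℕ)) ∈ X)).erase A1 := by
      intro X hX
      rw [Finset.mem_filter] at hX
      obtain ⟨hX1, hX0⟩ := hX
      rcases (hmemE' X).1 hX1 with rfl | rfl | hXo
      · exact absurd hX0 (Zset_x0_not_mem hj₁P)
      · exact absurd hX0 (Zset_x0_not_mem hj₂P)
      · rw [Finset.mem_erase, Finset.mem_filter]
        exact ⟨((hmemE0 X).1 hXo).2.1, ((hmemE0 X).1 hXo).1, hX0⟩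
    calc (ℰ'.filter (fun X => ((0 : ℕ), (0 : ℕ)) ∈ X)).card
        ≤ ((ℰ.filter (fun X => ((0 : ℕ), (0 : ℕ)) ∈ X)).erase A1).card :=
          Finset.card_le_card hfsub
      _ < (ℰ.filter (fun X => ((0 : ℕ), (0 : ℕ)) ∈ X)).card := by
          apply Finset.card_erase_lt_of_mem
          rw [Finset.mem_filter]
          exact ⟨hA1, h01⟩

end PairStep

section MainInduction

/-- the special case `n = 2`, `r = 2` with a disjoint pair present -/
lemma r2_direct {n r : ℕ} (hn2 : n = 2) (hr2 : r = 2)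
    {ℰ : Finset (Finset (ℕ × ℕ))} (hsub : ℰ ⊆ depthTwoClawIndep n r)
    (hint : ∀ A ∈ ℰ, ∀ B ∈ ℰ, (A ∩ B).Nonempty)
    {A1 A2 : Finset (ℕ × ℕ)} (hA1 : A1 ∈ ℰ) (hA2 : A2 ∈ ℰ)
    (h01 : ((0 : ℕ), (0 : ℕ)) ∈ A1) (h02 : ((0 : ℕ), (0 : ℕ)) ∈ A2)
    (hdisj : Asupp A1 ∩ Asupp A2 = ∅) :
    ℰ.card ≤ ((depthTwoClawIndep n r).filter (fun I => ((1 : ℕ), (1 : ℕ)) ∈ I)).card := by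
  classical
  have hn22 : n + 2 = 2 * r := by omega
  obtain ⟨hcompl, hA12ne⟩ := pair_structure hn22 (by omega) hsub hA1 hA2 h01 h02 hdisj
  obtain ⟨hA1enc, hPsub, hPcard, _⟩ := indep_with_x0 (hsub hA1) h01
  obtain ⟨hA2enc, hQsub, hQcard, _⟩ := indep_with_x0 (hsub hA2) h02
  have hcompl' : Asupp A1 = Finset.Icc 1 n \ Asupp A2 := by
    rw [hcompl, Finset.sdiff_sdiff_self_left]
    exact (Finset.inter_eq_right.2 hPsub).symm
  have hmeets1 : ∀ W ∈ ℰ, W ≠ A2 → ∃ q ∈ Asupp A1, ((q : ℕ), (1 : ℕ)) ∈ W :=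
    meets_P hn22 (by omega) hsub hint hA1 hA2 h01 h02 hcompl
  have hmeets2 : ∀ W ∈ ℰ, W ≠ A1 → ∃ q ∈ Asupp A2, ((q : ℕ), (1 : ℕ)) ∈ W := by
    have hdisj' : Asupp A2 ∩ Asupp A1 = ∅ := by
      rw [Finset.inter_comm]; exact hdisj
    exact meets_P hn22 (by omega) hsub hint hA2 hA1 h02 h01 hcompl'
  -- every member is A1, A2 or the all-x set
  have hmem : ∀ W ∈ ℰ, W = A1 ∨ W = A2 ∨ W = Xall (Finset.Icc 1 n) := by
    intro W hW
    by_cases h0W : ((0 : ℕ), (0 : ℕ)) ∈ W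
    · obtain ⟨hWenc, hRsub, hRcard, _⟩ := indep_with_x0 (hsub hW) h0W
      by_cases hWA2 : W = A2
      · exact Or.inr (Or.inl hWA2)
      · left
        obtain ⟨q, hq, hqW⟩ := hmeets1 W hW hWA2
        -- both Asupp W and Asupp A1 are singletons containing q?
        have hqR : q ∈ Asupp W := by
          unfold Asupp
          rw [Finset.mem_image]
          refine ⟨((q : ℕ), (1 : ℕ)), Finset.mem_erase.2 ⟨?_, hqW⟩, rfl⟩
          simp only [ne_eq, Prod.mk.injEq, not_and]
          intro _
          omega
        have h1 : Asupp W = {q} := by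
          apply Finset.eq_singleton_iff_unique_mem.2
          refine ⟨hqR, ?_⟩
          intro x hx
          have hcard1 : (Asupp W).card = 1 := by rw [hRcard]; omega
          obtain ⟨a, ha⟩ := Finset.card_eq_one.1 hcard1
          rw [ha, Finset.mem_singleton] at hx hqR
          rw [hx, hqR]
        have h2 : Asupp A1 = {q} := by
          apply Finset.eq_singleton_iff_unique_mem.2
          refine ⟨hq, ?_⟩
          intro x hx
          have hcard1 : (Asupp A1).card = 1 := by rw [hPcard]; omega
          obtain ⟨a, ha⟩ := Finset.card_eq_one.1 hcard1
          rw [ha, Finset.mem_singleton] at hx hq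
          rw [hx, hq]
        rw [hWenc, hA1enc, h1, h2]
    · right; right
      obtain ⟨q, hq, hqW⟩ := hmeets1 W hW (fun h => h0W (h ▸ h02))
      obtain ⟨q', hq', hq'W⟩ := hmeets2 W hW (fun h => h0W (h ▸ h01))
      have hqq' : q ≠ q' := by
        intro h
        have : q ∈ Asupp A1 ∩ Asupp A2 := Finset.mem_inter.2 ⟨hq, h ▸ hq'⟩
        rw [hdisj] at this
        exact absurd this (Finset.notMem_empty _)
      have hWcard : W.card = 2 := by
        rw [(mem_claw_indep.1 (hsub hW)).2.1]; omega
      have hpair : ({((q : ℕ), (1 : ℕ)), ((q' : ℕ), (1 : ℕ))} : Finset (ℕ × ℕ)) ⊆ W := by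
        intro v hv
        rcases Finset.mem_insert.1 hv with rfl | hv
        · exact hqW
        · rw [Finset.mem_singleton.1 hv]; exact hq'W
      have hpcard : ({((q : ℕ), (1 : ℕ)), ((q' : ℕ), (1 : ℕ))} : Finset (ℕ × ℕ)).card = 2 := by
        rw [Finset.card_insert_of_notMem, Finset.card_singleton]
        rw [Finset.mem_singleton]
        intro h
        rw [Prod.mk.injEq] at h
        exact hqq' h.1
      have hWeq : ({((q : ℕ), (1 : ℕ)), ((q' : ℕ), (1 : ℕ))} : Finset (ℕ × ℕ)) = W :=
        Finset.eq_of_subset_of_card_le hpair (by omega)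
      rw [← hWeq]
      -- now identify with Xall (Icc 1 n)
      have hPq : Asupp A1 = {q} := by
        apply Finset.eq_singleton_iff_unique_mem.2
        refine ⟨hq, fun x hx => ?_⟩
        have hcard1 : (Asupp A1).card = 1 := by rw [hPcard]; omega
        obtain ⟨a, ha⟩ := Finset.card_eq_one.1 hcard1
        rw [ha, Finset.mem_singleton] at hx hq
        rw [hx, hq]
      have hQq : Asupp A2 = {q'} := by
        apply Finset.eq_singleton_iff_unique_mem.2
        refine ⟨hq', fun x hx => ?_⟩
        have hcard1 : (Asupp A2).card = 1 := by rw [hQcard]; omega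
        obtain ⟨a, ha⟩ := Finset.card_eq_one.1 hcard1
        rw [ha, Finset.mem_singleton] at hx hq'
        rw [hx, hq']
      have hunion : Finset.Icc 1 n = {q} ∪ {q'} := by
        rw [← hPq, ← hQq, hcompl, Finset.union_sdiff_of_subset hPsub]
      rw [hunion]
      unfold Xall
      rw [Finset.image_union, Finset.image_singleton, Finset.image_singleton]
      rfl
  have hsub3 : ℰ ⊆ {A1, A2, Xall (Finset.Icc 1 n)} := by
    intro W hW
    rcases hmem W hW with rfl | rfl | rfl
    · exact Finset.mem_insert_self _ _
    · exact Finset.mem_insert_of_mem (Finset.mem_insert_self _ _)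
    · exact Finset.mem_insert_of_mem (Finset.mem_insert_of_mem (Finset.mem_singleton_self _))
  have hE3 : ℰ.card ≤ 3 := by
    calc ℰ.card ≤ ({A1, A2, Xall (Finset.Icc 1 n)} : Finset (Finset (ℕ × ℕ))).card :=
        Finset.card_le_card hsub3
      _ ≤ 3 := by
        apply le_trans (Finset.card_insert_le _ _)
        have := Finset.card_insert_le A2 ({Xall (Finset.Icc 1 n)} : Finset (Finset (ℕ × ℕ)))
        rw [Finset.card_singleton] at this
        omega
  have hsl := star_lower (n := n) (r := r) (by omega) (by omega)
  subst hn2; subst hr2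
  have hval : (2 - 1).choose (2 - 2) + (2 - 1).choose (2 - 1) * 2 ^ (2 - 1) = 3 := by
    norm_num
  rw [hval] at hsl
  omega

/-- main induction on the number of `x₀`-sets -/
lemma claw_aux (n r : ℕ) (hn : 2 ≤ n) (hr : 2 ≤ r) (hrn : 2 * r - 2 ≤ n) :
    ∀ m : ℕ, ∀ ℰ : Finset (Finset (ℕ × ℕ)), ℰ ⊆ depthTwoClawIndep n r →
      (∀ A ∈ ℰ, ∀ B ∈ ℰ, (A ∩ B).Nonempty) →
      (ℰ.filter (fun X => ((0 : ℕ), (0 : ℕ)) ∈ X)).card ≤ m →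
      ℰ.card ≤ ((depthTwoClawIndep n r).filter (fun I => ((1 : ℕ), (1 : ℕ)) ∈ I)).card := by
  intro m
  induction m with
  | zero =>
    intro ℰ hsub hint hm
    apply conclude hn hr hrn ℰ hsub hint
    intro A hA h0 A' hA' h0'
    exfalso
    have : A ∈ ℰ.filter (fun X => ((0 : ℕ), (0 : ℕ)) ∈ X) := Finset.mem_filter.2 ⟨hA, h0⟩
    have h2 := Finset.card_eq_zero.1 (Nat.le_zero.1 hm)
    rw [h2] at this
    exact absurd this (Finset.notMem_empty _)
  | succ m ih =>
    intro ℰ hsub hint hm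
    by_cases hAcase : ∀ A ∈ ℰ, ((0 : ℕ), (0 : ℕ)) ∈ A → ∀ A' ∈ ℰ, ((0 : ℕ), (0 : ℕ)) ∈ A' →
        (Asupp A ∩ Asupp A').Nonempty
    · exact conclude hn hr hrn ℰ hsub hint hAcase
    · push_neg at hAcase
      obtain ⟨A1, hA1, h01, A2, hA2, h02, hdisj⟩ := hAcase
      by_cases hncase : 2 * r - 1 ≤ n
      · -- there must be a stability violation : compress
        by_cases hstab : ∀ A ∈ ℰ, ((0 : ℕ), (0 : ℕ)) ∈ A → ∀ j ∈ Finset.Icc 1 n,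
            ((j : ℕ), (1 : ℕ)) ∉ A → Xall (insert j (Asupp A)) ∈ ℰ
        · exfalso
          have := stable_Aint hncase hr hsub hint hstab A1 hA1 h01 A2 hA2 h02
          rw [hdisj] at this
          exact Finset.not_nonempty_empty this
        · push_neg at hstab
          obtain ⟨A, hA, h0, j, hjIcc, hj1, hXnot⟩ := hstab
          have hmoved : UV.compress {((j : ℕ), (1 : ℕ))} {((0 : ℕ), (0 : ℕ))} A ∉ ℰ := by
            rw [compress_of_x0 h0 hj1]
            obtain ⟨hAenc, _, _, _⟩ := indep_with_x0 (hsub hA) h0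
            rw [hAenc, compress_Aenc]
            exact hXnot
          have hC1 := compression_sub_indep (n := n) (r := r) hjIcc hsub
          have hC2 := compression_intersecting (ℰ := ℰ) (j := j) hint
          have hlt := compression_filter_lt hA h0 hj1 hmoved
          rw [← UV.card_compression {((j : ℕ), (1 : ℕ))} {((0 : ℕ), (0 : ℕ))} ℰ]
          exact ih _ hC1 hC2 (by omega)
      · have hn22 : n + 2 = 2 * r := by omega
        by_cases hr3 : 3 ≤ r
        · obtain ⟨ℰ', h1, h2, h3, h4⟩ :=
            replacement_step hn22 hr3 hsub hint hA1 hA2 h01 h02 hdisj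
          rw [← h3]
          exact ih ℰ' h1 h2 (by omega)
        · exact r2_direct (by omega) (by omega) hsub hint hA1 hA2 h01 h02 hdisj

end MainInduction

/-- **Theorem.** If `n ≥ 2r - 2` and `n ≥ 2`, then every intersecting family of
`r`-element independent sets of the depth-two claw `Tₙ` has size at most the
number of `r`-element independent sets of `Tₙ` containing the vertex
`x₁ = (1,1)`. -/
theorem depthTwoClaw_star_property_case_one
    (n r : ℕ) (hn : 2 ≤ n) (hr : 1 ≤ r) (hrn : 2 * r - 2 ≤ n)
    (ℰ : Finset (Finset (ℕ × ℕ)))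
    (hℰ : ℰ ⊆ depthTwoClawIndep n r)
    (hint : ∀ A ∈ ℰ, ∀ B ∈ ℰ, (A ∩ B).Nonempty) :
    ℰ.card ≤
      ((depthTwoClawIndep n r).filter (fun I => ((1 : ℕ), (1 : ℕ)) ∈ I)).card := by
  classical
  by_cases hr2 : 2 ≤ r
  · exact claw_aux n r hn hr2 hrn _ ℰ hℰ hint le_rfl
  · -- r = 1
    have hr1 : r = 1 := by omega
    have hstar : 1 ≤ ((depthTwoClawIndep n r).filter
        (fun I => ((1 : ℕ), (1 : ℕ)) ∈ I)).card := by
      rw [Nat.one_le_iff_ne_zero, ← Nat.pos_iff_ne_zero, Finset.card_pos]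
      refine ⟨{((1 : ℕ), (1 : ℕ))}, Finset.mem_filter.2 ⟨?_, Finset.mem_singleton_self _⟩⟩
      rw [mem_claw_indep]
      refine ⟨?_, by rw [Finset.card_singleton, hr1], ?_⟩
      · rw [Finset.singleton_subset_iff, mem_claw_verts]
        right
        rw [mem_sGrid]
        exact ⟨⟨le_refl 1, by omega⟩, Or.inl rfl⟩
      · intro u hu v hv
        rw [Finset.mem_singleton] at hu hv
        subst hu; subst hv
        exact (depthTwoClaw n).loopless.irrefl _
    have hE1 : ℰ.card ≤ 1 := by
      rw [Finset.card_le_one]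
      intro a ha b hb
      obtain ⟨v, hv⟩ := hint a ha b hb
      rw [Finset.mem_inter] at hv
      have hca : a.card = 1 := by
        rw [(mem_claw_indep.1 (hℰ ha)).2.1, hr1]
      have hcb : b.card = 1 := by
        rw [(mem_claw_indep.1 (hℰ hb)).2.1, hr1]
      obtain ⟨w, hw⟩ := Finset.card_eq_one.1 hca
      obtain ⟨w', hw'⟩ := Finset.card_eq_one.1 hcb
      rw [hw, hw']
      rw [hw, Finset.mem_singleton] at hv
      rw [hw', Finset.mem_singleton] at hv
      rw [← hv.1, ← hv.2]
    omega
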